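/- arXiv:2106.14856 — 11 statements merged into one kernel-verified Lean document; each statement's English description precedes it below -/
import Mathlib

section
/- For every natural number N ≥ 1, the graph F_N is isomorphic to a subgraph of the Farey graph. Precisely, the map φ : X_N → X_1 sending a reduced fraction x/(Ny) to the reduced fraction x/y (and ∞ to ∞) is injective, and two vertices of X_N are adjacent in F_N if and only if their images under φ are adjacent in the Farey graph F_1. -/
/-- Membership in the vertex set `X_N`: a pair `(p, q)` of integers represents the
reduced fraction `p/q` with `q ≥ 0`, `gcd(p, q) = 1` and `N ∣ q`; the pair `(1, 0)`
represents `∞ = 1/0`. -/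
def memX (N : ℕ) (v : ℤ × ℤ) : Prop :=
  0 ≤ v.2 ∧ IsCoprime v.1 v.2 ∧ (N : ℤ) ∣ v.2 ∧ (v.2 = 0 → v.1 = 1)

/-- The vertex set `X_N` of the graph `F_N`. -/
def X (N : ℕ) : Type := {v : ℤ × ℤ // memX N v}

/-- The vertex `∞ = 1/0`. -/
def infty (N : ℕ) : X N :=
  ⟨(1, 0), ⟨le_refl 0, isCoprime_one_left, dvd_zero _, fun _ => rfl⟩⟩

/-- The value of a vertex as a rational number (`∞` is sent to junk). -/
def fval {N : ℕ} (v : X N) : ℚ := (v.1.1 : ℚ) / (v.1.2 : ℚ)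

/-- The graph `F_N`: two vertices `p/q` and `r/s` (in lowest terms, with `∞ = 1/0`)
are adjacent if and only if `r*q - s*p = ±N`. -/
def FareyGraph (N : ℕ) : SimpleGraph (X N) where
  Adj v w := v ≠ w ∧ (w.1.1 * v.1.2 - w.1.2 * v.1.1 = (N : ℤ) ∨
      w.1.1 * v.1.2 - w.1.2 * v.1.1 = -(N : ℤ))
  symm := by
    constructor
    rintro v w ⟨hne, h | h⟩
    · exact ⟨hne.symm, Or.inr (by linear_combination -h)⟩
    · exact ⟨hne.symm, Or.inl (by linear_combination -h)⟩
  loopless := by constructor; rintro v ⟨hne, -⟩; exact hne rfl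

/-- For every `N ≥ 1`, `F_N` is isomorphic to a subgraph of the
Farey graph: the map `φ : X_N → X_1` sending the reduced fraction `x/(N·y)` to the
reduced fraction `x/y` (and `∞` to `∞`) is injective, and two vertices of `X_N` are
adjacent in `F_N` iff their images are adjacent in the Farey graph `F_1`. -/
theorem stmt0 (N : ℕ) (hN : 1 ≤ N) :
    ∃ φ : X N → X 1,
      Function.Injective φ ∧
      (∀ v : X N, (φ v).1.1 = v.1.1 ∧ v.1.2 = (N : ℤ) * (φ v).1.2) ∧
      (∀ v w : X N, (FareyGraph N).Adj v w ↔ (FareyGraph 1).Adj (φ v) (φ w)) := by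
  have hN0 : (N : ℤ) ≠ 0 := by
    exact_mod_cast Nat.one_le_iff_ne_zero.mp hN
  have hNpos : (0 : ℤ) < N := by exact_mod_cast hN
  have hdiv : ∀ v : X N, (N : ℤ) * (v.1.2 / N) = v.1.2 := fun v =>
    Int.mul_ediv_cancel' v.2.2.2.1
  refine ⟨fun v => ⟨(v.1.1, v.1.2 / N), ?_, ?_, one_dvd _, ?_⟩, ?_, ?_, ?_⟩
  · -- 0 ≤ q/N
    exact Int.ediv_nonneg v.2.1 (le_of_lt hNpos)
  · -- coprime
    have h := v.2.2.1
    rw [← hdiv v] at h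
    exact h.of_mul_right_right
  · -- q/N = 0 → p = 1
    intro h
    apply v.2.2.2.2
    have h' : v.1.2 / (N : ℤ) = 0 := h
    have := hdiv v
    rw [h', mul_zero] at this
    exact this.symm
  · -- injective
    intro v w h
    have h1 : v.1.1 = w.1.1 := congrArg (fun x => x.1.1) h
    have h2 : v.1.2 / (N : ℤ) = w.1.2 / N := congrArg (fun x => x.1.2) h
    have h3 : v.1.2 = w.1.2 := by rw [← hdiv v, ← hdiv w, h2]
    exact Subtype.ext (Prod.ext h1 h3)
  · -- the formula
    intro v
    exact ⟨rfl, (hdiv v).symm⟩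
  · -- adjacency
    intro v w
    constructor
    · rintro ⟨hne, h⟩
      refine ⟨fun hc => hne (Subtype.ext (Prod.ext (congrArg (fun x => x.1.1) hc) ?_)),
        ?_⟩
      · have h2 : v.1.2 / (N : ℤ) = w.1.2 / N := congrArg (fun x => x.1.2) hc
        rw [← hdiv v, ← hdiv w, h2]
      · simp only [Nat.cast_one]
        have key : w.1.1 * v.1.2 - w.1.2 * v.1.1
            = (N : ℤ) * (w.1.1 * (v.1.2 / N) - (w.1.2 / N) * v.1.1) := by
          rw [mul_sub, mul_comm (w.1.1) ((v.1.2 : ℤ) / N), ← mul_assoc, ← mul_assoc,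
            hdiv v, hdiv w]
          ring
        rcases h with h | h
        · left
          apply mul_left_cancel₀ hN0
          rw [mul_one, ← key, h]
        · right
          apply mul_left_cancel₀ hN0
          rw [mul_neg, mul_one, ← key, h]
    · rintro ⟨hne, h⟩
      refine ⟨fun hc => hne (by rw [hc]), ?_⟩
      simp only [Nat.cast_one] at h
      have key : w.1.1 * v.1.2 - w.1.2 * v.1.1
          = (N : ℤ) * (w.1.1 * (v.1.2 / N) - (w.1.2 / N) * v.1.1) := by
        rw [mul_sub, mul_comm (w.1.1) ((v.1.2 : ℤ) / N), ← mul_assoc, ← mul_assoc,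
          hdiv v, hdiv w]
        ring
      rcases h with h | h
      · left; rw [key, h, mul_one]
      · right; rw [key, h, mul_neg, mul_one]
end

section
/- If N = p^l where p is a prime and l ∈ ℕ ∪ {0} (so in particular if N = 1), then the graph F_N is connected. -/
lemma eq_infty_of_snd_eq_zero {N : ℕ} (v : X N) (h : v.1.2 = 0) : v = infty N := by
  apply Subtype.ext
  have h1 := v.2.2.2.2 h
  show v.1 = (1, 0)
  exact Prod.ext h1 h

lemma step_lemma (p l : ℕ) (hp : p.Prime) (v : X (p ^ l)) (m : ℕ) (a r m₁ : ℤ)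
    (ha : v.1.1 = a) (hv : v.1.2 = (p : ℤ) ^ l * m)
    (hm₁ : 0 < m₁) (hlt : m₁ < (m : ℤ))
    (hcr : IsCoprime r ((p : ℤ) ^ l)) (hcm : IsCoprime r m₁)
    (ε : ℤ) (hε : ε = 1 ∨ ε = -1) (key : r * m - a * m₁ = ε) :
    ∃ w : X (p ^ l), (FareyGraph (p ^ l)).Adj v w ∧ w.1.2 = (p : ℤ) ^ l * m₁ := by
  have hppos : (0 : ℤ) < (p : ℤ) ^ l := pow_pos (by exact_mod_cast hp.pos) l
  have hmem : memX (p ^ l) (r, (p : ℤ) ^ l * m₁) := by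
    refine ⟨le_of_lt (mul_pos hppos hm₁), hcr.mul_right hcm, ?_, ?_⟩
    · exact ⟨m₁, by push_cast; ring⟩
    · intro h0
      exfalso
      have h0' : (p : ℤ) ^ l * m₁ = 0 := h0
      nlinarith
  refine ⟨⟨(r, (p : ℤ) ^ l * m₁), hmem⟩, ⟨?_, ?_⟩, rfl⟩
  · intro hvw
    have : v.1.2 = (p : ℤ) ^ l * m₁ := by rw [hvw]
    rw [hv] at this
    have : (m : ℤ) = m₁ := by
      have := mul_left_cancel₀ (ne_of_gt hppos) this
      exact this
    omega
  · rw [hv, ha]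
    have hcast : ((p ^ l : ℕ) : ℤ) = (p : ℤ) ^ l := by push_cast; ring
    rcases hε with h1 | h1
    · left; rw [hcast]; subst h1; linear_combination ((p : ℤ) ^ l) * key
    · right; rw [hcast]; subst h1; linear_combination ((p : ℤ) ^ l) * key

lemma reach_infty (p l : ℕ) (hp : p.Prime) :
    ∀ m : ℕ, ∀ v : X (p ^ l), v.1.2 = (p : ℤ) ^ l * m →
      (FareyGraph (p ^ l)).Reachable v (infty (p ^ l)) := by
  have hpZ : Prime (p : ℤ) := Nat.prime_iff_prime_int.1 hp
  have hppos : (0 : ℤ) < (p : ℤ) ^ l := pow_pos (by exact_mod_cast hp.pos) l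
  intro m
  induction m using Nat.strong_induction_on with
  | _ m ih =>
    intro v hv
    rcases Nat.eq_zero_or_pos m with hm0 | hmpos
    · subst hm0
      simp only [Nat.cast_zero, mul_zero] at hv
      rw [eq_infty_of_snd_eq_zero v hv]
    rcases eq_or_lt_of_le (show 1 ≤ m from hmpos) with hm1 | hm2
    · -- m = 1 : adjacent to infinity
      refine SimpleGraph.Adj.reachable ⟨?_, Or.inl ?_⟩
      · intro hvi
        have : v.1.2 = 0 := by rw [hvi]; rfl
        rw [hv, ← hm1] at this
        push_cast at this
        nlinarith
      · show (1 : ℤ) * v.1.2 - 0 * v.1.1 = _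
        rw [hv, ← hm1]
        push_cast
        ring
    -- m ≥ 2
    set a := v.1.1 with ha
    have hco : IsCoprime a v.1.2 := v.2.2.1
    rw [hv] at hco
    have hcom : IsCoprime a (m : ℤ) := hco.of_mul_right_right
    obtain ⟨u, w, huv⟩ := hcom
    have hmne : (m : ℤ) ≠ 0 := by exact_mod_cast hmpos.ne'
    set m₁ : ℤ := (-u) % (m : ℤ) with hm₁def
    have hm₁nonneg : 0 ≤ m₁ := Int.emod_nonneg _ hmne
    have hm₁lt : m₁ < (m : ℤ) := Int.emod_lt_of_pos _ (by exact_mod_cast hmpos)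
    have hdvd1 : (m : ℤ) ∣ m₁ + u := by
      rw [hm₁def, Int.emod_def]
      exact ⟨-((-u) / m), by ring⟩
    obtain ⟨k, hk⟩ := hdvd1
    have hdvd2 : a * m₁ + 1 = (m : ℤ) * (a * k + w) := by
      have hm₁' : m₁ = (m : ℤ) * k - u := by omega
      rw [hm₁']
      linear_combination -huv
    set r : ℤ := a * k + w with hrdef
    have key : r * m - a * m₁ = 1 := by linear_combination -hdvd2
    have hm₁pos : 0 < m₁ := by
      rcases eq_or_lt_of_le hm₁nonneg with h0 | h0
      · exfalso
        have h1 : r * (m : ℤ) = 1 := by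
          have hk := key
          rw [← h0] at hk
          linarith
        have hdd : (m : ℤ) ∣ 1 := ⟨r, by linarith⟩
        have := Int.le_of_dvd one_pos hdd
        have : (2 : ℤ) ≤ (m : ℤ) := by exact_mod_cast hm2
        omega
      · exact h0
    set m₂ : ℤ := (m : ℤ) - m₁ with hm₂def
    set r' : ℤ := a - r with hr'def
    have key2 : r' * m - a * m₂ = -1 := by rw [hr'def, hm₂def]; linear_combination -key
    have hm₂pos : 0 < m₂ := by omega
    have hm₂lt : m₂ < (m : ℤ) := by omega
    have hcm1 : IsCoprime r m₁ := ⟨m, -a, by linear_combination key⟩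
    have hcm2 : IsCoprime r' m₂ := ⟨-(m : ℤ), a, by linear_combination -key2⟩
    -- one of r, r' is coprime to p^l
    have hmain : IsCoprime r ((p : ℤ) ^ l) ∨ IsCoprime r' ((p : ℤ) ^ l) := by
      by_contra hcon
      push_neg at hcon
      obtain ⟨hc1, hc2⟩ := hcon
      have hl : l ≠ 0 := by
        rintro rfl
        exact hc1 (by simpa using isCoprime_one_right)
      have hpr : (p : ℤ) ∣ r := by
        by_contra hdvd
        exact hc1 (((hpZ.coprime_iff_not_dvd.2 hdvd).pow_left).symm)
      have hpr' : (p : ℤ) ∣ r' := by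
        by_contra hdvd
        exact hc2 (((hpZ.coprime_iff_not_dvd.2 hdvd).pow_left).symm)
      have hpa : (p : ℤ) ∣ a := by
        have : a = r + r' := by rw [hr'def]; ring
        rw [this]; exact dvd_add hpr hpr'
      have hpN : (p : ℤ) ∣ (p : ℤ) ^ l * m :=
        dvd_mul_of_dvd_left (dvd_pow_self _ hl) _
      exact hpZ.not_unit (hco.isUnit_of_dvd' hpa hpN)
    rcases hmain with hcop | hcop
    · obtain ⟨wv, hadj, hwv⟩ := step_lemma p l hp v m a r m₁ rfl hv hm₁pos hm₁lt hcop hcm1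
        1 (Or.inl rfl) key
      have hm₁nat : m₁ = ((m₁.toNat : ℕ) : ℤ) := by omega
      refine (SimpleGraph.Adj.reachable hadj).trans (ih m₁.toNat (by omega) wv ?_)
      rw [hwv]; congr 1
    · obtain ⟨wv, hadj, hwv⟩ := step_lemma p l hp v m a r' m₂ rfl hv hm₂pos hm₂lt hcop hcm2
        (-1) (Or.inr rfl) key2
      have hm₂nat : m₂ = ((m₂.toNat : ℕ) : ℤ) := by omega
      refine (SimpleGraph.Adj.reachable hadj).trans (ih m₂.toNat (by omega) wv ?_)
      rw [hwv]; congr 1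

/-- If `N = p^l` with `p` prime and `l ∈ ℕ ∪ {0}` (so in
particular if `N = 1`), then the graph `F_N` is connected. -/
theorem stmt2 (p l : ℕ) (hp : p.Prime) : (FareyGraph (p ^ l)).Connected := by
  have hppos : (0 : ℤ) < (p : ℤ) ^ l := pow_pos (by exact_mod_cast hp.pos) l
  have hreach : ∀ v : X (p ^ l), (FareyGraph (p ^ l)).Reachable v (infty (p ^ l)) := by
    intro v
    obtain ⟨hnn, hcop, ⟨c, hc⟩, h0⟩ := v.2
    have hc' : v.1.2 = (p : ℤ) ^ l * c := by rw [hc]; push_cast; ring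
    have hcnn : 0 ≤ c := by nlinarith [hc' ▸ hnn]
    have : v.1.2 = (p : ℤ) ^ l * (c.toNat : ℤ) := by rw [hc']; congr 1; omega
    exact reach_infty p l hp c.toNat v this
  rw [SimpleGraph.connected_iff]
  exact ⟨fun u v => (hreach u).trans (hreach v).symm, ⟨infty _⟩⟩
end

section
/- For every prime p, every l ∈ ℕ, and every vertex P = x/(p^l y) ∈ X_{p^l} with x/(p^l y) in lowest terms, there exists a path ∞ → P_0 → P_1 → ⋯ → P_n = P in F_{p^l} whose vertices P_i = p_i/q_i (in lowest terms) have strictly increasing denominators q_0 < q_1 < ⋯ < q_n. -/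
lemma key (p l : ℕ) (hp : p.Prime) (hl : 1 ≤ l) (x : X (p ^ l))
    (hx2 : x.1.2 ≠ 0) :
    ∃ y : X (p ^ l), (FareyGraph (p ^ l)).Adj y x ∧ y.1.2 < x.1.2 := by
  obtain ⟨⟨a, q⟩, hq0, hcop, hdvd, hinf⟩ := x
  simp only at hx2 hq0 hcop hdvd hinf ⊢
  set N : ℤ := ((p ^ l : ℕ) : ℤ) with hN
  have hN' : N = (p : ℤ) ^ l := by push_cast [hN]; ring
  have hNpos : 0 < N := by
    rw [hN']; exact pow_pos (by exact_mod_cast hp.pos) l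
  have hqpos : 0 < q := lt_of_le_of_ne hq0 (Ne.symm hx2)
  obtain ⟨q'', hq⟩ := hdvd
  have hq''pos : 0 < q'' := by
    by_contra h
    push_neg at h
    nlinarith
  by_cases hq1 : q'' = 1
  · -- x is adjacent to ∞
    refine ⟨infty (p ^ l), ⟨?_, Or.inr ?_⟩, ?_⟩
    · intro h
      have := congrArg (fun z => z.1.2) h
      simp [infty] at this
      exact hx2 this.symm
    · show a * (0:ℤ) - q * 1 = -N
      rw [hq, hq1]; ring
    · show (0:ℤ) < q
      exact hqpos
  · have hq''2 : 2 ≤ q'' := by omega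
    have hcopq'' : IsCoprime a q'' :=
      hcop.of_isCoprime_of_dvd_right ⟨N, by rw [hq]; ring⟩
    obtain ⟨u, v, huv⟩ := hcopq''
    set b : ℤ := (-u) % q'' with hbdef
    have hb0 : 0 ≤ b := Int.emod_nonneg _ (by omega)
    have hblt : b < q'' := Int.emod_lt_of_pos _ hq''pos
    have hmoddvd : q'' ∣ a * b + 1 := by
      refine ⟨v - a * (-u / q''), ?_⟩
      have hb : b = -u - q'' * (-u / q'') := by
        rw [hbdef, Int.emod_def]
      rw [hb]; linear_combination -huv
    have hbne : b ≠ 0 := by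
      intro h
      rw [h] at hmoddvd
      simp at hmoddvd
      have := Int.le_of_dvd one_pos hmoddvd
      omega
    set r1 : ℤ := (a * b + 1) / q'' with hr1def
    have hr1 : q'' * r1 = a * b + 1 := Int.mul_ediv_cancel' hmoddvd
    have hpa : IsCoprime a (p : ℤ) := by
      refine hcop.of_isCoprime_of_dvd_right ?_
      rw [hq]
      exact Dvd.dvd.mul_right (by rw [hN']; exact dvd_pow_self _ (by omega)) q''
    have hpz : Prime (p : ℤ) := Nat.prime_iff_prime_int.mp hp
    -- choose (r, s'') with q''*r - a*s'' = ±1, 0 < s'' < q'', p ∤ r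
    obtain ⟨r, s'', hs0, hs1, hpr, hsign⟩ :
        ∃ r s'' : ℤ, 0 < s'' ∧ s'' < q'' ∧ ¬ (p : ℤ) ∣ r ∧
          (a * s'' - q'' * r = -1 ∨ a * s'' - q'' * r = 1) := by
      by_cases hdp : (p : ℤ) ∣ r1
      · refine ⟨a - r1, q'' - b, by omega, by omega, ?_, Or.inr (by linear_combination hr1)⟩
        intro h
        have : (p : ℤ) ∣ a := by
          have := dvd_add h hdp
          simpa using this
        exact (hpz.coprime_iff_not_dvd.mp hpa.symm) this
      · exact ⟨r1, b, by omega, hblt, hdp, Or.inl (by linear_combination -hr1)⟩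
    have hcoprs : IsCoprime r s'' := by
      rcases hsign with h | h
      · exact ⟨q'', -a, by linear_combination -h⟩
      · exact ⟨-q'', a, by linear_combination h⟩
    have hcoprN : IsCoprime r N := by
      rw [hN']
      exact ((hpz.coprime_iff_not_dvd.mpr hpr).symm).pow_right
    refine ⟨⟨(r, N * s''), ?_, hcoprN.mul_right hcoprs, Dvd.intro _ rfl, ?_⟩, ⟨?_, ?_⟩, ?_⟩
    · positivity
    · intro h
      exfalso; simp only at h; nlinarith
    · intro h
      have := congrArg (fun z => z.1.2) h
      simp only at this
      nlinarith
    · show a * (N * s'') - q * r = N ∨ a * (N * s'') - q * r = -N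
      rcases hsign with h | h
      · exact Or.inr (by rw [hq]; linear_combination N * h)
      · exact Or.inl (by rw [hq]; linear_combination N * h)
    · show N * s'' < q
      rw [hq]; nlinarith

lemma eq_infty_of (N : ℕ) (x : X N) (h : x.1.2 = 0) : x = infty N := by
  obtain ⟨⟨a, q⟩, h0, h1, h2, h3⟩ := x
  simp only at h
  subst h
  have := h3 rfl
  subst this
  rfl

lemma path_aux (p l : ℕ) (hp : p.Prime) (hl : 1 ≤ l) :
    ∀ m : ℕ, ∀ x : X (p ^ l), x.1.2.toNat ≤ m → x ≠ infty (p ^ l) →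
    ∃ (n : ℕ) (P : ℕ → X (p ^ l)),
      P 0 = infty (p ^ l) ∧ P (n + 1) = x ∧
      (∀ i, i ≤ n → (FareyGraph (p ^ l)).Adj (P i) (P (i + 1))) ∧
      (∀ i, i ≤ n → (P i).1.2 < (P (i + 1)).1.2) := by
  intro m
  induction m with
  | zero =>
    intro x hm hx
    exfalso
    apply hx
    apply eq_infty_of
    have := x.2.1
    omega
  | succ m ih =>
    intro x hm hx
    have hx2 : x.1.2 ≠ 0 := fun h => hx (eq_infty_of _ x h)
    obtain ⟨y, hadj, hlt⟩ := key p l hp hl x hx2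
    have hy0 : 0 ≤ y.1.2 := y.2.1
    by_cases hy : y = infty (p ^ l)
    · refine ⟨0, fun i => if i = 0 then infty (p ^ l) else x, by simp, by simp, ?_, ?_⟩
      · intro i hi
        interval_cases i
        simpa [← hy] using hadj
      · intro i hi
        interval_cases i
        simp only [if_pos rfl, if_neg one_ne_zero]
        show (infty (p ^ l)).1.2 < x.1.2
        have hxq : 0 ≤ x.1.2 := x.2.1
        show (0 : ℤ) < x.1.2
        omega
    · have hym : y.1.2.toNat ≤ m := by
        have hxq : 0 ≤ x.1.2 := x.2.1
        omega
      obtain ⟨n, P, hP0, hPn, hPadj, hPlt⟩ := ih y hym hy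
      refine ⟨n + 1, fun i => if i ≤ n + 1 then P i else x, by simp [hP0], ?_, ?_, ?_⟩
      · simp
      · intro i hi
        dsimp only
        rcases Nat.lt_or_ge i (n + 1) with h | h
        · rw [if_pos (by omega : i ≤ n + 1), if_pos (by omega : i + 1 ≤ n + 1)]
          exact hPadj i (by omega)
        · have hi' : i = n + 1 := by omega
          subst hi'
          rw [if_pos (le_rfl : n + 1 ≤ n + 1), if_neg (by omega : ¬ n + 1 + 1 ≤ n + 1), hPn]
          exact hadj
      · intro i hi
        dsimp only
        rcases Nat.lt_or_ge i (n + 1) with h | h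
        · rw [if_pos (by omega : i ≤ n + 1), if_pos (by omega : i + 1 ≤ n + 1)]
          exact hPlt i (by omega)
        · have hi' : i = n + 1 := by omega
          subst hi'
          rw [if_pos (le_rfl : n + 1 ≤ n + 1), if_neg (by omega : ¬ n + 1 + 1 ≤ n + 1), hPn]
          exact hlt

/-- For every prime `p`, `l ∈ ℕ`, and vertex `x ≠ ∞` of `F_{p^l}`,
there is a path `∞ = P 0 → P 1 → ⋯ → P (n+1) = x` in `F_{p^l}` whose vertices have
strictly increasing denominators. -/
theorem stmt3 (p l : ℕ) (hp : p.Prime) (hl : 1 ≤ l) (x : X (p ^ l))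
    (hx : x ≠ infty (p ^ l)) :
    ∃ (n : ℕ) (P : ℕ → X (p ^ l)),
      P 0 = infty (p ^ l) ∧ P (n + 1) = x ∧
      (∀ i, i ≤ n → (FareyGraph (p ^ l)).Adj (P i) (P (i + 1))) ∧
      (∀ i, i ≤ n → (P i).1.2 < (P (i + 1)).1.2) := by
  exact path_aux p l hp hl x.1.2.toNat x le_rfl hx
end

section
/- The convergents of an F_N-continued fraction are pairwise distinct: if i ≠ j then p_i/q_i ≠ p_j/q_j. -/
/-- A finite `F_N`-continued fraction `1/(0+) N/(b+) ε₁/(a₁+) ⋯ εₙ/(aₙ)` with `n`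
partial quotients.  Indices are shifted by one: the field `p i` is the paper's
`p_{i-1}`, so `p 0 = p₋₁ = 1`, `q 0 = q₋₁ = 0`, `p 1 = p₀ = b`, `q 1 = q₀ = N`,
and the paper's `i`-th convergent `p_i/q_i` is `p (i+1) / q (i+1)`. -/
structure FCF (N : ℕ) (n : ℕ) where
  b : ℤ
  a : ℕ → ℤ
  ε : ℕ → ℤ
  p : ℕ → ℤ
  q : ℕ → ℤ
  hb : IsCoprime b (N : ℤ)
  hp0 : p 0 = 1
  hq0 : q 0 = 0
  hp1 : p 1 = b
  hq1 : q 1 = N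
  ha : ∀ i, 1 ≤ i → i ≤ n → 1 ≤ a i
  hε : ∀ i, 1 ≤ i → i ≤ n → ε i = 1 ∨ ε i = -1
  hrecp : ∀ i, 1 ≤ i → i ≤ n → p (i + 1) = a i * p i + ε i * p (i - 1)
  hrecq : ∀ i, 1 ≤ i → i ≤ n → q (i + 1) = a i * q i + ε i * q (i - 1)
  cond1 : ∀ i, 1 ≤ i → i < n → 1 ≤ a i + ε (i + 1)
  cond2 : ∀ i, 1 ≤ i → i ≤ n → 1 ≤ a i + ε i
  cond3 : ∀ i, 1 ≤ i → i ≤ n → IsCoprime (p (i + 1)) (q (i + 1))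


lemma fcf_key (N n : ℕ) (hN : 1 < N) (F : FCF N n) :
    ∀ i, 1 ≤ i → i ≤ n →
      (N : ℤ) ≤ F.q i ∧ F.q i ≤ F.q (i + 1) ∧
      (i < n → F.ε (i + 1) = -1 → F.q i < F.q (i + 1)) ∧
      (2 ≤ i → F.q i < F.q (i + 1)) := by
  intro i hi
  induction i, hi using Nat.le_induction with
  | base =>
    intro h1n
    have hq2 : F.q 2 = F.a 1 * F.q 1 + F.ε 1 * F.q 0 := F.hrecq 1 le_rfl h1n
    rw [F.hq0, F.hq1] at hq2
    have ha1 : 1 ≤ F.a 1 := F.ha 1 le_rfl h1n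
    have hNpos : (0:ℤ) < N := by exact_mod_cast (by omega : 0 < N)
    refine ⟨by rw [F.hq1], ?_, ?_, by omega⟩
    · rw [F.hq1]; nlinarith
    · intro hlt hε2
      have := F.cond1 1 le_rfl hlt
      rw [hε2] at this
      rw [F.hq1]; nlinarith
  | succ i hi IH =>
    intro hin
    have hin' : i ≤ n := by omega
    obtain ⟨hNi, hmono, hstrict, -⟩ := IH hin'
    have hNi1 : (N : ℤ) ≤ F.q (i + 1) := le_trans hNi hmono
    have hrec : F.q (i + 2) = F.a (i + 1) * F.q (i + 1) + F.ε (i + 1) * F.q i := by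
      have := F.hrecq (i + 1) (by omega) hin
      simpa using this
    have ha : 1 ≤ F.a (i + 1) := F.ha (i + 1) (by omega) hin
    have hNpos : (0:ℤ) < N := by exact_mod_cast (by omega : 0 < N)
    have hst : F.q (i + 1) < F.q (i + 2) := by
      rcases F.hε (i + 1) (by omega) hin with hε | hε
      · rw [hε] at hrec; nlinarith
      · have ha2 : 2 ≤ F.a (i + 1) := by
          have := F.cond2 (i + 1) (by omega) hin; omega
        have hlt : F.q i < F.q (i + 1) := hstrict (by omega) hε
        rw [hε] at hrec; nlinarith
    exact ⟨hNi1, le_of_lt hst, fun _ _ => hst, fun _ => hst⟩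

lemma fcf_qN (N n : ℕ) (hN : 1 < N) (F : FCF N n) :
    ∀ k, 1 ≤ k → k ≤ n + 1 → (N : ℤ) ≤ F.q k := by
  intro k hk hkn
  rcases Nat.lt_or_ge k 2 with h | h
  · interval_cases k
    · rw [F.hq1]
  · have h1 : 1 ≤ k - 1 := by omega
    have h2 : k - 1 ≤ n := by omega
    obtain ⟨h3, h4, -, -⟩ := fcf_key N n hN F (k - 1) h1 h2
    have : k - 1 + 1 = k := by omega
    rw [this] at h4
    exact le_trans h3 h4

lemma fcf_qle (N n : ℕ) (hN : 1 < N) (F : FCF N n) :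
    ∀ i j, 1 ≤ i → i ≤ j → j ≤ n + 1 → F.q i ≤ F.q j := by
  intro i j hi hij
  induction j, hij using Nat.le_induction with
  | base => intro _; exact le_rfl
  | succ j hj IH =>
    intro hjn
    have h1 : 1 ≤ j := le_trans hi hj
    have h2 : j ≤ n := by omega
    obtain ⟨-, hmono, -, -⟩ := fcf_key N n hN F j h1 h2
    exact le_trans (IH (by omega)) hmono

lemma fcf_qlt (N n : ℕ) (hN : 1 < N) (F : FCF N n) :
    ∀ i j, 1 ≤ i → i < j → j ≤ n + 1 → ¬(i = 1 ∧ j = 2) → F.q i < F.q j := by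
  intro i j hi hij hjn hne
  rcases Nat.lt_or_ge i 2 with h | h
  · -- i = 1, j ≥ 3
    have hi1 : i = 1 := by omega
    have hj3 : 3 ≤ j := by omega
    have hn2 : 2 ≤ n := by omega
    obtain ⟨-, h12, -, -⟩ := fcf_key N n hN F 1 le_rfl (by omega)
    obtain ⟨-, -, -, h23⟩ := fcf_key N n hN F 2 (by omega) hn2
    have h3j : F.q 3 ≤ F.q j := fcf_qle N n hN F 3 j (by omega) hj3 hjn
    subst hi1
    calc F.q 1 ≤ F.q 2 := h12
    _ < F.q 3 := h23 le_rfl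
    _ ≤ F.q j := h3j
  · obtain ⟨-, -, -, hstr⟩ := fcf_key N n hN F i hi (by omega)
    have := fcf_qle N n hN F (i + 1) j (by omega) hij hjn
    exact lt_of_lt_of_le (hstr h) this

lemma fcf_cop (N n : ℕ) (F : FCF N n) :
    ∀ k, 1 ≤ k → k ≤ n + 1 → IsCoprime (F.p k) (F.q k) := by
  intro k hk hkn
  rcases Nat.lt_or_ge k 2 with h | h
  · interval_cases k
    · rw [F.hp1, F.hq1]; exact F.hb
  · have := F.cond3 (k - 1) (by omega) (by omega)
    have hk1 : k - 1 + 1 = k := by omega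
    rwa [hk1] at this

lemma fcf_aux (N n : ℕ) (hN : 1 < N) (F : FCF N n) :
    ∀ i j, 1 ≤ i → i < j → j ≤ n + 1 →
      (F.p i : ℚ) / (F.q i : ℚ) ≠ (F.p j : ℚ) / (F.q j : ℚ) := by
  intro i j hi hij hjn heq
  have hin : i ≤ n + 1 := by omega
  have hNpos : (0:ℤ) < N := by exact_mod_cast (by omega : 0 < N)
  have hqi : (0:ℤ) < F.q i := lt_of_lt_of_le hNpos (fcf_qN N n hN F i hi hin)
  have hqj : (0:ℤ) < F.q j := lt_of_lt_of_le hNpos (fcf_qN N n hN F j (by omega) hjn)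
  have hqi0 : (F.q i : ℚ) ≠ 0 := by exact_mod_cast hqi.ne'
  have hqj0 : (F.q j : ℚ) ≠ 0 := by exact_mod_cast hqj.ne'
  rw [div_eq_div_iff hqi0 hqj0] at heq
  have hcross : F.p i * F.q j = F.p j * F.q i := by exact_mod_cast heq
  have hcopi := fcf_cop N n F i hi hin
  have hcopj := fcf_cop N n F j (by omega) hjn
  have hd1 : F.q i ∣ F.q j := by
    apply hcopi.symm.dvd_of_dvd_mul_left
    exact ⟨F.p j, by linarith [hcross]⟩
  have hd2 : F.q j ∣ F.q i := by
    apply hcopj.symm.dvd_of_dvd_mul_left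
    exact ⟨F.p i, by linarith [hcross]⟩
  have hqeq : F.q i = F.q j := Int.dvd_antisymm hqi.le hqj.le hd1 hd2
  have hpeq : F.p i = F.p j := by
    have := hcross
    rw [hqeq] at this
    exact mul_right_cancel₀ hqj.ne' this
  by_cases hc : i = 1 ∧ j = 2
  · obtain ⟨hi1, hj2⟩ := hc
    subst hi1; subst hj2
    have h1n : 1 ≤ n := by omega
    have hq2 : F.q 2 = F.a 1 * F.q 1 + F.ε 1 * F.q 0 := F.hrecq 1 le_rfl h1n
    have hp2 : F.p 2 = F.a 1 * F.p 1 + F.ε 1 * F.p 0 := F.hrecp 1 le_rfl h1n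
    rw [F.hq0, F.hq1] at hq2
    rw [F.hp0, F.hp1] at hp2
    have ha1 : F.a 1 = 1 := by
      rw [F.hq1] at hqeq
      have hz : (F.a 1 - 1) * N = 0 := by linarith [hqeq, hq2]
      rcases mul_eq_zero.mp hz with h | h
      · linarith
      · exact absurd h hNpos.ne'
    have hε1 := F.hε 1 le_rfl h1n
    rw [F.hp1] at hpeq
    rcases hε1 with h | h <;> rw [h, ha1] at hp2 <;> omega
  · exact absurd hqeq (ne_of_lt (fcf_qlt N n hN F i j hi hij hjn hc))

/-- The convergents of an `F_N`-continued fraction are pairwise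
distinct (`F.p (i+1) / F.q (i+1)` is the paper's `i`-th convergent `p_i/q_i`). -/
theorem stmt8 (N n : ℕ) (hN : 1 < N) (F : FCF N n) :
    ∀ i j, 1 ≤ i → i ≤ n + 1 → 1 ≤ j → j ≤ n + 1 → i ≠ j →
      (F.p i : ℚ) / (F.q i : ℚ) ≠ (F.p j : ℚ) / (F.q j : ℚ) := by
  intro i j hi hin hj hjn hne
  rcases Nat.lt_or_ge i j with h | h
  · exact fcf_aux N n hN F i j hi h hjn
  · have : j < i := by omega
    exact fun heq => fcf_aux N n hN F j i hj this hin heq.symm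
end

section
/- Let N ∈ ℕ and suppose ∞ = P_{−1} → P_0 = b/N → P_1 → ⋯ → P_n is a path in F_N whose vertices P_i = p_i/q_i (in lowest terms, with p_{−1} = 1, q_{−1} = 0, p_0 = b, q_0 = N) have strictly increasing denominators q_{−1} < q_0 < q_1 < ⋯ < q_n and with P_n ≠ b/N. Then for every 1 ≤ i ≤ n there exist a positive integer a_i and ε_i ∈ {1, −1} such that p_i = a_i p_{i−1} + ε_i p_{i−2} and q_i = a_i q_{i−1} + ε_i q_{i−2}. -/
/-- If `∞ = P 0 → P 1 = b/N → ⋯ → P (n+1)` is a path in `F_N`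
with strictly increasing denominators and `P (n+1) ≠ b/N`, then for every
`1 ≤ i ≤ n` there are `a ≥ 1` and `ε = ±1` with
`pᵢ = a·p_{i-1} + ε·p_{i-2}` and `qᵢ = a·q_{i-1} + ε·q_{i-2}`
(paper's `P_{i}` is `P (i+1)`). -/
theorem stmt10 (N : ℕ) (hN : 1 ≤ N) (n : ℕ) (P : ℕ → X N)
    (h0 : P 0 = infty N)
    (hadj : ∀ i, i ≤ n → (FareyGraph N).Adj (P i) (P (i + 1)))
    (hden : ∀ i, i ≤ n → (P i).1.2 < (P (i + 1)).1.2)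
    (hq0 : (P 1).1.2 = (N : ℤ))
    (hne : P (n + 1) ≠ P 1) :
    ∀ i, 1 ≤ i → i ≤ n →
      ∃ a ε : ℤ, 1 ≤ a ∧ (ε = 1 ∨ ε = -1) ∧
        (P (i + 1)).1.1 = a * (P i).1.1 + ε * (P (i - 1)).1.1 ∧
        (P (i + 1)).1.2 = a * (P i).1.2 + ε * (P (i - 1)).1.2 := by
  intro i hi1 hin
  obtain ⟨j, rfl⟩ : ∃ j, i = j + 1 := ⟨i - 1, (Nat.succ_pred_eq_of_pos hi1).symm⟩
  simp only [Nat.add_sub_cancel]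
  set p0 := (P j).1.1 with hp0
  set q0 := (P j).1.2 with hq0'
  set p1 := (P (j + 1)).1.1 with hp1
  set q1 := (P (j + 1)).1.2 with hq1
  set p2 := (P (j + 1 + 1)).1.1 with hp2
  set q2 := (P (j + 1 + 1)).1.2 with hq2
  have h1 := (hadj j (by omega)).2
  have h2 := (hadj (j + 1) (by omega)).2
  have hd0 := hden j (by omega)
  have hd1 := hden (j + 1) (by omega)
  have hq0nn : (0 : ℤ) ≤ q0 := (P j).2.1
  have hq1pos : (0 : ℤ) < q1 := lt_of_le_of_lt hq0nn hd0
  have hcop : IsCoprime p1 q1 := (P (j + 1)).2.2.1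
  -- choose ε so that (p2 - ε p0) q1 - (q2 - ε q0) p1 = 0
  have key : ∃ ε : ℤ, (ε = 1 ∨ ε = -1) ∧
      (p2 - ε * p0) * q1 - (q2 - ε * q0) * p1 = 0 := by
    rcases h1 with h1 | h1 <;> rcases h2 with h2 | h2
    · exact ⟨-1, Or.inr rfl, by linear_combination h2 - h1⟩
    · exact ⟨1, Or.inl rfl, by linear_combination h2 + h1⟩
    · exact ⟨1, Or.inl rfl, by linear_combination h2 + h1⟩
    · exact ⟨-1, Or.inr rfl, by linear_combination h2 - h1⟩
  obtain ⟨ε, hε, hkey⟩ := key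
  have hdvd : q1 ∣ q2 - ε * q0 := by
    refine hcop.symm.dvd_of_dvd_mul_right ⟨p2 - ε * p0, ?_⟩
    linarith [hkey]
  obtain ⟨a, ha⟩ := hdvd
  have hq2eq : q2 = a * q1 + ε * q0 := by linarith [ha, mul_comm q1 a]
  have hp2eq : p2 = a * p1 + ε * p0 := by
    have h : (p2 - ε * p0) * q1 = (a * p1) * q1 := by
      have : (q2 - ε * q0) * p1 = (a * p1) * q1 := by rw [ha]; ring
      linarith [hkey, this]
    have := mul_right_cancel₀ (ne_of_gt hq1pos) h
    linarith
  have ha1 : 1 ≤ a := by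
    by_contra h
    push_neg at h
    have ha0 : a ≤ 0 := by omega
    rcases hε with rfl | rfl <;> nlinarith
  exact ⟨a, ε, ha1, hε, hp2eq, hq2eq⟩
end

section
/- Let N ∈ ℕ and suppose ∞ = P_{−1} → P_0 = b/N → P_1 → ⋯ → P_n is a path in F_N whose vertices P_i = p_i/q_i (in lowest terms, with p_{−1} = 1, q_{−1} = 0, p_0 = b, q_0 = N) have strictly increasing denominators, and let a_i ≥ 1 and ε_i ∈ {1,−1} be the coefficients satisfying p_i = a_i p_{i−1} + ε_i p_{i−2} and q_i = a_i q_{i−1} + ε_i q_{i−2} for 1 ≤ i ≤ n. Then ε_1 = −1 if and only if P_1 < P_0, and for every 2 ≤ i ≤ n, ε_i = −1 if and only if the differences P_i − P_{i−1} and P_{i−1} − P_{i−2} have the same sign (i.e., the edge P_{i−1} → P_i is direction retaining). -/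
/-- With the path and coefficients as in Statement 10,
`ε₁ = −1` iff `P₁ < P₀`, and for `2 ≤ i ≤ n`, `εᵢ = −1` iff the differences
`Pᵢ − P_{i−1}` and `P_{i−1} − P_{i−2}` have the same sign, i.e. the edge
`P_{i−1} → Pᵢ` is direction retaining (paper's `P_i` is `P (i+1)`). -/
theorem stmt11 (N : ℕ) (hN : 1 ≤ N) (n : ℕ) (P : ℕ → X N)
    (h0 : P 0 = infty N)
    (hadj : ∀ i, i ≤ n → (FareyGraph N).Adj (P i) (P (i + 1)))
    (hden : ∀ i, i ≤ n → (P i).1.2 < (P (i + 1)).1.2)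
    (hq0 : (P 1).1.2 = (N : ℤ))
    (a ε : ℕ → ℤ)
    (ha : ∀ i, 1 ≤ i → i ≤ n → 1 ≤ a i)
    (hε : ∀ i, 1 ≤ i → i ≤ n → ε i = 1 ∨ ε i = -1)
    (hrecp : ∀ i, 1 ≤ i → i ≤ n →
      (P (i + 1)).1.1 = a i * (P i).1.1 + ε i * (P (i - 1)).1.1)
    (hrecq : ∀ i, 1 ≤ i → i ≤ n →
      (P (i + 1)).1.2 = a i * (P i).1.2 + ε i * (P (i - 1)).1.2) :
    (1 ≤ n → (ε 1 = -1 ↔ fval (P 2) < fval (P 1))) ∧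
    (∀ i, 2 ≤ i → i ≤ n →
      (ε i = -1 ↔ 0 < (fval (P (i + 1)) - fval (P i)) * (fval (P i) - fval (P (i - 1))))) := by
  have hN' : (1 : ℤ) ≤ (N : ℤ) := by exact_mod_cast hN
  have hp0 : (P 0).1.1 = 1 := by rw [h0]; rfl
  have hq00 : (P 0).1.2 = 0 := by rw [h0]; rfl
  have hqpos : ∀ j, 1 ≤ j → j ≤ n + 1 → 0 < (P j).1.2 := by
    intro j
    induction j with
    | zero => omega
    | succ k ih =>
      intro _ hk
      rcases Nat.eq_zero_or_pos k with hk0 | hk1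
      · subst hk0; rw [hq0]; exact_mod_cast hN
      · exact lt_trans (ih hk1 (by omega)) (hden k (by omega))
  have hDrec : ∀ i, 1 ≤ i → i ≤ n →
      (P (i+1)).1.1 * (P i).1.2 - (P (i+1)).1.2 * (P i).1.1
        = - ε i * ((P i).1.1 * (P (i-1)).1.2 - (P i).1.2 * (P (i-1)).1.1) := by
    intro i h1 h2
    have ha1 := hrecp i h1 h2
    have ha2 := hrecq i h1 h2
    linear_combination (P i).1.2 * ha1 - (P i).1.1 * ha2
  have hfd : ∀ v w : X N, 0 < v.1.2 → 0 < w.1.2 →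
      fval w - fval v = ((w.1.1 * v.1.2 - w.1.2 * v.1.1 : ℤ) : ℚ) / (v.1.2 * w.1.2) := by
    intro v w hv hw
    have hv' : (v.1.2 : ℚ) ≠ 0 := Int.cast_ne_zero.mpr hv.ne'
    have hw' : (w.1.2 : ℚ) ≠ 0 := Int.cast_ne_zero.mpr hw.ne'
    rw [fval, fval, div_sub_div _ _ hw' hv']
    push_cast
    rw [div_eq_div_iff (by positivity) (by positivity)]
    ring
  have hsignn : ∀ (x : ℤ) (d : ℚ), 0 < d → ((x : ℚ) / d < 0 ↔ x < 0) := by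
    intro x d hd
    rw [div_neg_iff]
    constructor
    · rintro (⟨-, h⟩ | ⟨h, -⟩)
      · linarith
      · exact_mod_cast h
    · intro h
      exact Or.inr ⟨by exact_mod_cast h, hd⟩
  have hsignp : ∀ (x : ℤ) (d : ℚ), 0 < d → (0 < (x : ℚ) / d ↔ 0 < x) := by
    intro x d hd
    rw [div_pos_iff]
    constructor
    · rintro (⟨h, -⟩ | ⟨-, h⟩)
      · exact_mod_cast h
      · linarith
    · intro h
      exact Or.inl ⟨by exact_mod_cast h, hd⟩
  constructor
  · intro h1n
    have hq1 : 0 < (P 1).1.2 := by rw [hq0]; exact_mod_cast hN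
    have hq2 : 0 < (P 2).1.2 := hqpos 2 (by omega) (by omega)
    have hD1 : (P 2).1.1 * (P 1).1.2 - (P 2).1.2 * (P 1).1.1 = ε 1 * (N : ℤ) := by
      have h := hDrec 1 le_rfl h1n
      norm_num at h
      rw [hp0, hq00] at h
      linear_combination h + ε 1 * hq0
    have hf := hfd (P 1) (P 2) hq1 hq2
    rw [hD1] at hf
    rw [show (fval (P 2) < fval (P 1)) ↔ fval (P 2) - fval (P 1) < 0 from sub_neg.symm,
      hf, hsignn _ _ (by positivity)]
    rcases hε 1 le_rfl h1n with he | he <;> rw [he] <;> omega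
  · intro i h2i hin
    obtain ⟨j, rfl⟩ : ∃ j, i = j + 2 := ⟨i - 2, by omega⟩
    have e1 : j + 2 - 1 = j + 1 := rfl
    have e2 : j + 1 + 1 = j + 2 := rfl
    rw [e1]
    have hq1 : 0 < (P (j+1)).1.2 := hqpos _ (by omega) (by omega)
    have hq2 : 0 < (P (j+2)).1.2 := hqpos _ (by omega) (by omega)
    have hq3 : 0 < (P (j+2+1)).1.2 := hqpos _ (by omega) (by omega)
    have hDprev := (hadj (j+1) (by omega)).2
    rw [e2] at hDprev
    have hDi := hDrec (j+2) (by omega) hin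
    rw [e1] at hDi
    have hf1 := hfd (P (j+2)) (P (j+2+1)) hq2 hq3
    have hf2 := hfd (P (j+1)) (P (j+2)) hq1 hq2
    rw [hf1, hf2, hDi, div_mul_div_comm, ← Int.cast_mul,
      hsignp _ _ (by positivity)]
    have hNN : 0 < (N : ℤ) * N := mul_pos (by linarith) (by linarith)
    rcases hε (j+2) (by omega) hin with he | he <;>
      rcases hDprev with hd | hd <;> rw [he, hd] <;>
      constructor <;> intro h <;> linarith [hNN]
end

section
/- For every prime p, every l ∈ ℕ, and every x ∈ X_{p^l} with x ≠ ∞, there exists a well directed path from ∞ to x in the graph F_{p^l}. -/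
/-- `P 0 = ∞ = P₋₁, P 1 = P₀, …, P (n+1) = Pₙ` is a well directed path in `F_N`:
consecutive vertices are adjacent, denominators strictly increase, and whenever
`P_{i-1}` is adjacent to `P_{i+1}` (paper indices, `0 ≤ i ≤ n-2`), the edge from
`P_{i+1}` to `P_{i+2}` is direction changing, i.e.
`P_i < P_{i+2} < P_{i+1}` or `P_{i+1} < P_{i+2} < P_i`. -/
def IsWellDirectedPath (N : ℕ) (n : ℕ) (P : ℕ → X N) : Prop :=
  P 0 = infty N ∧
  (∀ i, i ≤ n → (FareyGraph N).Adj (P i) (P (i + 1))) ∧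
  (∀ i, i ≤ n → (P i).1.2 < (P (i + 1)).1.2) ∧
  (∀ i, i + 2 ≤ n → (FareyGraph N).Adj (P i) (P (i + 2)) →
    (fval (P (i + 1)) < fval (P (i + 3)) ∧ fval (P (i + 3)) < fval (P (i + 2))) ∨
    (fval (P (i + 2)) < fval (P (i + 3)) ∧ fval (P (i + 3)) < fval (P (i + 1))))

def Det (v w : ℤ × ℤ) : ℤ := w.1 * v.2 - w.2 * v.1

lemma snd_pos_of_ne_infty {N : ℕ} (x : X N) (hx : x ≠ infty N) : 0 < x.1.2 := by
  rcases x.2.1.lt_or_eq with h | h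
  · exact h
  · exact absurd (Subtype.ext (Prod.ext (x.2.2.2.2 h.symm) h.symm)) hx

lemma adj_iff {N : ℕ} (v w : X N) :
    (FareyGraph N).Adj v w ↔ v ≠ w ∧ (Det v.1 w.1 = (N:ℤ) ∨ Det v.1 w.1 = -(N:ℤ)) :=
  Iff.rfl

lemma between_pos (Nz : ℤ) (hN : 0 < Nz)
    (v1 v2 w1 w2 z1 z2 : ℤ)
    (hv2 : 0 < v2) (hvw : v2 < w2) (hwz : w2 < z2)
    (h1 : w1 * v2 - w2 * v1 = Nz) (h2 : z1 * w2 - z2 * w1 = -Nz) :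
    (v1:ℚ)/v2 < (z1:ℚ)/z2 ∧ (z1:ℚ)/z2 < (w1:ℚ)/w2 := by
  have hw2 : (0:ℤ) < w2 := hv2.trans hvw
  have hz2 : (0:ℤ) < z2 := hw2.trans hwz
  have key : w2 * (z1 * v2 - z2 * v1) = Nz * (z2 - v2) := by
    linear_combination v2 * h2 + z2 * h1
  constructor
  · rw [div_lt_div_iff₀ (by exact_mod_cast hv2) (by exact_mod_cast hz2)]
    have h3 : v1 * z2 < z1 * v2 := by nlinarith
    exact_mod_cast h3
  · rw [div_lt_div_iff₀ (by exact_mod_cast hz2) (by exact_mod_cast hw2)]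
    have h3 : z1 * w2 < w1 * z2 := by nlinarith
    exact_mod_cast h3

lemma between_neg (Nz : ℤ) (hN : 0 < Nz)
    (v1 v2 w1 w2 z1 z2 : ℤ)
    (hv2 : 0 < v2) (hvw : v2 < w2) (hwz : w2 < z2)
    (h1 : w1 * v2 - w2 * v1 = -Nz) (h2 : z1 * w2 - z2 * w1 = Nz) :
    (w1:ℚ)/w2 < (z1:ℚ)/z2 ∧ (z1:ℚ)/z2 < (v1:ℚ)/v2 := by
  have h := between_pos Nz hN (-v1) v2 (-w1) w2 (-z1) z2 hv2 hvw hwz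
    (by linarith) (by linarith)
  obtain ⟨ha, hb⟩ := h
  push_cast at ha hb
  rw [neg_div, neg_div] at ha hb
  constructor <;> linarith

/-- Two distinct neighbors of `w` with smaller denominators have opposite sign
determinants. -/
lemma opposite_sign {N : ℕ} (hN : 0 < N) (u v w : X N)
    (huv : u.1.2 < v.1.2) (hvw : v.1.2 < w.1.2)
    (hDu : Det u.1 w.1 = (N:ℤ) ∨ Det u.1 w.1 = -(N:ℤ))
    (hDv : Det v.1 w.1 = (N:ℤ) ∨ Det v.1 w.1 = -(N:ℤ)) :
    Det u.1 w.1 = - Det v.1 w.1 := by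
  have hNne : ((N:ℤ)) ≠ 0 := by exact_mod_cast hN.ne'
  have hu0 : 0 ≤ u.1.2 := u.2.1
  have habs : ¬ (Det u.1 w.1 = Det v.1 w.1) := by
    intro hEq
    -- w1 * (v2 - u2) = w2 * (v1 - u1)
    have h1 : w.1.1 * (v.1.2 - u.1.2) = w.1.2 * (v.1.1 - u.1.1) := by
      unfold Det at hEq; ring_nf; ring_nf at hEq; linarith
    have hcop : IsCoprime w.1.2 w.1.1 := w.2.2.1.symm
    have hdvd : w.1.2 ∣ (v.1.2 - u.1.2) := by
      refine hcop.dvd_of_dvd_mul_left ?_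
      exact ⟨v.1.1 - u.1.1, by linarith [h1]⟩
    have hle := Int.le_of_dvd (by omega) hdvd
    omega
  rcases hDu with h1 | h1 <;> rcases hDv with h2 | h2 <;>
    simp [h1, h2] at habs ⊢ <;> omega

lemma extend {N : ℕ} (hN : 0 < N) (n : ℕ) (P : ℕ → X N) (w z : X N)
    (hP : IsWellDirectedPath N n P) (hw : P (n+1) = w)
    (hzw : w ≠ z)
    (hdet : Det w.1 z.1 = (N:ℤ) ∨ Det w.1 z.1 = -(N:ℤ))
    (hlt : w.1.2 < z.1.2)
    (hA : Det (P n).1 w.1 = -(Det w.1 z.1) ∨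
      ∀ u : X N, u.1.2 < w.1.2 → Det u.1 w.1 ≠ -(Det w.1 z.1)) :
    IsWellDirectedPath N (n+1) (fun k => if k ≤ n+1 then P k else z) := by
  obtain ⟨h0, hadj, hmono, htrig⟩ := hP
  set P' : ℕ → X N := fun k => if k ≤ n+1 then P k else z with hP'def
  have hPk : ∀ k, k ≤ n+1 → P' k = P k := fun k hk => if_pos hk
  have hPtop : P' (n+2) = z := if_neg (by omega)
  refine ⟨by rw [hPk 0 (by omega)]; exact h0, ?_, ?_, ?_⟩
  · intro i hi
    rcases Nat.lt_or_ge i (n+1) with h | h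
    · rw [hPk i (by omega), hPk (i+1) (by omega)]; exact hadj i (by omega)
    · have hie : i = n+1 := by omega
      subst hie
      rw [hPk (n+1) le_rfl, hPtop, hw]
      exact ⟨hzw, hdet⟩
  · intro i hi
    rcases Nat.lt_or_ge i (n+1) with h | h
    · rw [hPk i (by omega), hPk (i+1) (by omega)]; exact hmono i (by omega)
    · have hie : i = n+1 := by omega
      subst hie
      rw [hPk (n+1) le_rfl, hPtop, hw]; exact hlt
  · intro i hi2 htr
    rcases Nat.lt_or_ge (i+2) (n+1) with h | h
    · rw [hPk i (by omega), hPk (i+2) (by omega)] at htr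
      rw [hPk (i+1) (by omega), hPk (i+2) (by omega), hPk (i+3) (by omega)]
      exact htrig i (by omega) htr
    · -- i + 2 = n + 1
      have hie : n = i + 1 := by omega
      rw [hPk i (by omega), hPk (i+2) (by omega)] at htr
      rw [hPk (i+1) (by omega), hPk (i+2) (by omega)]
      have hz3 : P' (i+3) = z := by rw [show i+3 = n+2 by omega]; exact hPtop
      rw [hz3]
      have hw2 : P (i+2) = w := by rw [show i+2 = n+1 by omega]; exact hw
      rw [hw2] at htr ⊢
      have hPn : P n = P (i+1) := by rw [hie]
      -- denominators
      have hd1 : (P i).1.2 < (P (i+1)).1.2 := hmono i (by omega)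
      have hd2 : (P (i+1)).1.2 < w.1.2 := by
        have := hmono (i+1) (by omega); rwa [show i+1+1 = n+1 by omega, hw] at this
      have hv2pos : 0 < (P (i+1)).1.2 := lt_of_le_of_lt (P i).2.1 hd1
      -- determinants
      have hDu : Det (P i).1 w.1 = (N:ℤ) ∨ Det (P i).1 w.1 = -(N:ℤ) := htr.2
      have hDv : Det (P (i+1)).1 w.1 = (N:ℤ) ∨ Det (P (i+1)).1 w.1 = -(N:ℤ) := by
        have h5 := hadj (i+1) (by omega)
        rw [show i+1+1 = n+1 by omega, hw] at h5
        exact h5.2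
      have hsign : Det (P i).1 w.1 = - Det (P (i+1)).1 w.1 :=
        opposite_sign hN _ _ _ hd1 hd2 hDu hDv
      -- the chosen sign matches
      have hgood : Det (P (i+1)).1 w.1 = -(Det w.1 z.1) := by
        rcases hA with hA | hA
        · rwa [hPn] at hA
        · by_contra hbad
          have hNne : (N:ℤ) ≠ 0 := by exact_mod_cast hN.ne'
          have heq : Det (P (i+1)).1 w.1 = Det w.1 z.1 := by
            rcases hDv with h1 | h1 <;> rcases hdet with h2 | h2 <;>
              simp [h1, h2] at hbad ⊢ <;> omega
          exact hA (P i) (hd1.trans hd2) (by rw [hsign, heq])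
      have hNz : (0:ℤ) < (N:ℤ) := by exact_mod_cast hN
      rcases hdet with h2 | h2
      · -- Det w z = N, so Det v w = -N : use between_neg
        have h1 : Det (P (i+1)).1 w.1 = -(N:ℤ) := by rw [hgood, h2]
        have := between_neg (N:ℤ) hNz (P (i+1)).1.1 (P (i+1)).1.2 w.1.1 w.1.2
          z.1.1 z.1.2 hv2pos hd2 hlt h1 h2
        exact Or.inr ⟨this.1, this.2⟩
      · have h1 : Det (P (i+1)).1 w.1 = (N:ℤ) := by rw [hgood, h2]; ring
        have := between_pos (N:ℤ) hNz (P (i+1)).1.1 (P (i+1)).1.2 w.1.1 w.1.2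
          z.1.1 z.1.2 hv2pos hd2 hlt h1 h2
        exact Or.inl ⟨this.1, this.2⟩

lemma pdvd_pair {p l : ℕ} (hp : p.Prime) (c1 c2 : ℤ)
    (hg : Int.gcd c1 c2 ≠ 1) (hd : Int.gcd c1 c2 ∣ p ^ l) :
    (p:ℤ) ∣ c1 ∧ (p:ℤ) ∣ c2 := by
  obtain ⟨k, hk, hdk⟩ := (Nat.dvd_prime_pow hp).mp hd
  have hk0 : k ≠ 0 := by rintro rfl; simp at hdk; exact hg hdk
  have hpdvd : (p:ℤ) ∣ ((Int.gcd c1 c2 : ℕ):ℤ) := by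
    exact_mod_cast (hdk ▸ dvd_pow_self p hk0)
  exact ⟨hpdvd.trans (Int.gcd_dvd_left c1 c2), hpdvd.trans (Int.gcd_dvd_right c1 c2)⟩

lemma main (p l : ℕ) (hp : p.Prime) (hl : 1 ≤ l) :
    ∀ bn : ℕ, ∀ x : X (p^l), x ≠ infty (p^l) → x.1.2 = (bn : ℤ) →
    ∀ ε : ℤ, (ε = ((p^l : ℕ) : ℤ) ∨ ε = -((p^l : ℕ) : ℤ)) →
    ∃ n P, IsWellDirectedPath (p^l) n P ∧ P (n+1) = x ∧
      (Det (P n).1 x.1 = -ε ∨ ∀ u : X (p^l), u.1.2 < x.1.2 → Det u.1 x.1 ≠ -ε) := by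
  have hN : 0 < p ^ l := pow_pos hp.pos l
  have hNz : (0:ℤ) < ((p^l : ℕ) : ℤ) := by exact_mod_cast hN
  intro bn
  induction bn using Nat.strong_induction_on with
  | _ bn IH =>
  intro x hx hxb ε hε
  have hb0 : 0 < x.1.2 := snd_pos_of_ne_infty x hx
  set a := x.1.1 with ha
  set b := x.1.2 with hb
  have hcop : IsCoprime a b := x.2.2.1
  have hNb : ((p^l : ℕ) : ℤ) ∣ b := x.2.2.2.1
  obtain ⟨a', b', hbez⟩ := hcop
  set t : ℤ := (-ε * a') % b with htdef
  have ht0 : 0 ≤ t := Int.emod_nonneg _ hb0.ne'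
  have htb : t < b := Int.emod_lt_of_pos _ hb0
  have hmod : b * ((-ε * a') / b) + (-ε * a') % b = -ε * a' := Int.mul_ediv_add_emod _ _
  have hdvd : b ∣ a * t + ε := by
    refine ⟨ε * b' - a * ((-ε * a') / b), ?_⟩
    rw [htdef]
    linear_combination a * hmod - ε * hbez
  set v1 : ℤ := (a * t + ε) / b with hv1def
  have hv1 : b * v1 = a * t + ε := Int.mul_ediv_cancel' hdvd
  have hεN : ((p^l : ℕ) : ℤ) ∣ ε := by
    rcases hε with h | h <;> rw [h] <;> simp
  have hNt : ((p^l : ℕ) : ℤ) ∣ t := by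
    have hcopaN : IsCoprime a ((p^l : ℕ) : ℤ) :=
      IsCoprime.of_isCoprime_of_dvd_right ⟨a', b', hbez⟩ hNb
    have hat : ((p^l : ℕ) : ℤ) ∣ a * t := by
      have h1 : a * t = b * v1 - ε := by linarith
      rw [h1]
      exact dvd_sub (hNb.mul_right _) hεN
    exact hcopaN.symm.dvd_of_dvd_mul_left hat
  by_cases htz : t = 0
  · -- b = N, path of length one: ∞ → x
    have hbdvd : b ∣ ε := ⟨v1, by rw [htz] at hv1; linarith⟩
    have hbN : b = ((p^l : ℕ) : ℤ) := by
      refine Int.dvd_antisymm hb0.le hNz.le ?_ hNb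
      rcases hε with h | h
      · rwa [h] at hbdvd
      · rw [h] at hbdvd; exact (dvd_neg.mp hbdvd)
    refine ⟨0, fun k => Nat.casesOn k (infty (p^l)) (fun _ => x), ⟨rfl, ?_, ?_, ?_⟩, rfl, ?_⟩
    · intro i hi
      have : i = 0 := by omega
      subst this
      refine ⟨Ne.symm hx, Or.inr ?_⟩
      show x.1.1 * (infty (p^l)).1.2 - x.1.2 * (infty (p^l)).1.1 = _
      simp only [infty]
      rw [← hb, hbN]; ring
    · intro i hi
      have : i = 0 := by omega
      subst this
      exact hb0
    · intro i hi; omega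
    · have hD : Det (infty (p^l)).1 x.1 = -((p^l : ℕ) : ℤ) := by
        show x.1.1 * (infty (p^l)).1.2 - x.1.2 * (infty (p^l)).1.1 = _
        simp only [infty]
        rw [← hb, hbN]; ring
      rcases hε with h | h
      · left
        show Det (infty (p^l)).1 x.1 = -ε
        rw [hD, h]
      · right
        intro u hu
        have hu0 : 0 ≤ u.1.2 := u.2.1
        have huN : ((p^l : ℕ) : ℤ) ∣ u.1.2 := u.2.2.2.1
        have hu2 : u.1.2 = 0 := by
          by_contra hne
          have h2 := Int.le_of_dvd (lt_of_le_of_ne hu0 (Ne.symm hne)) huN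
          rw [hbN] at hu
          linarith
        have hu1 : u.1.1 = 1 := u.2.2.2.2 hu2
        show ¬ (x.1.1 * u.1.2 - x.1.2 * u.1.1 = -ε)
        rw [hu1, hu2, h, ← hb, hbN]
        intro hcon
        linarith
  · -- t > 0 : recursive step
    have htpos : 0 < t := lt_of_le_of_ne ht0 (Ne.symm htz)
    have hDvx : a * t - b * v1 = -ε := by linarith
    have hcop2 : IsCoprime a b := ⟨a', b', hbez⟩
    -- generic step for a valid predecessor candidate
    have key : ∀ c1 c2 : ℤ, 0 < c2 → c2 < b → IsCoprime c1 c2 → ((p^l:ℕ):ℤ) ∣ c2 →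
        ∀ δ : ℤ, (δ = ((p^l:ℕ):ℤ) ∨ δ = -((p^l:ℕ):ℤ)) → a * c2 - b * c1 = δ →
        ∃ n P, IsWellDirectedPath (p^l) n P ∧ P (n+1) = x ∧ Det (P n).1 x.1 = δ := by
      intro c1 c2 hc2 hc2b hcopc hNc δ hδ hD
      set v : X (p^l) := ⟨(c1, c2), hc2.le, hcopc, hNc, fun h => absurd h hc2.ne'⟩ with hvdef
      have hvne : v ≠ infty (p^l) := by
        intro h
        have h2 : c2 = (0:ℤ) := congrArg (fun y : X (p^l) => y.1.2) h
        exact hc2.ne' h2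
      have htn : v.1.2 = ((c2.toNat : ℕ) : ℤ) := by
        simp [hvdef, Int.toNat_of_nonneg hc2.le]
      have htlt : c2.toNat < bn := by
        have h2 : ((c2.toNat:ℕ):ℤ) < (bn:ℤ) := by
          rw [Int.toNat_of_nonneg hc2.le, ← hxb]; exact hc2b
        exact_mod_cast h2
      obtain ⟨n, P, hWD, hPn1, hA⟩ := IH c2.toNat htlt v hvne htn δ hδ
      have hDvx2 : Det v.1 x.1 = δ := hD
      have hzw : v ≠ x := by
        intro h
        have h2 : c2 = b := congrArg (fun y : X (p^l) => y.1.2) h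
        exact (ne_of_lt hc2b) h2
      have hdet' : Det v.1 x.1 = ((p^l:ℕ):ℤ) ∨ Det v.1 x.1 = -((p^l:ℕ):ℤ) := by
        rw [hDvx2]; exact hδ
      have hA' : Det (P n).1 v.1 = -(Det v.1 x.1) ∨
          ∀ u : X (p^l), u.1.2 < v.1.2 → Det u.1 v.1 ≠ -(Det v.1 x.1) := by
        rw [hDvx2]
        simpa using hA
      have hlt' : v.1.2 < x.1.2 := hc2b
      have hext := extend hN n P v x hWD hPn1 hzw hdet' hlt' hA'
      refine ⟨n+1, _, hext, if_neg (by omega), ?_⟩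
      show Det ((if n+1 ≤ n+1 then P (n+1) else x)).1 x.1 = δ
      rw [if_pos le_rfl, hPn1, hDvx2]
    by_cases hco : IsCoprime v1 t
    · obtain ⟨n, P, hWD, hPn1, hDfin⟩ := key v1 t htpos htb hco hNt (-ε)
        (by rcases hε with h | h
            · right; rw [h]
            · left; rw [h]; ring) hDvx
      exact ⟨n, P, hWD, hPn1, Or.inl hDfin⟩
    · -- the other candidate (a - v1, b - t) is coprime
      have hgcd1 : Int.gcd v1 t ≠ 1 := fun h => hco (Int.isCoprime_iff_gcd_eq_one.mpr h)
      have hpd1 : (p:ℤ) ∣ v1 ∧ (p:ℤ) ∣ t := by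
        refine pdvd_pair (l := l) hp v1 t hgcd1 ?_
        have h1 : ((Int.gcd v1 t : ℕ):ℤ) ∣ a * t - b * v1 :=
          dvd_sub ((Int.gcd_dvd_right v1 t).mul_left a) ((Int.gcd_dvd_left v1 t).mul_left b)
        rw [hDvx] at h1
        have h2 : ((Int.gcd v1 t : ℕ):ℤ) ∣ ((p^l:ℕ):ℤ) := by
          rcases hε with h | h
          · rw [h] at h1; exact dvd_neg.mp h1
          · rw [h] at h1; rw [neg_neg] at h1; exact h1
        exact_mod_cast h2
      have hco' : IsCoprime (a - v1) (b - t) := by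
        rw [Int.isCoprime_iff_gcd_eq_one]
        by_contra hg
        have hD' : a * (b - t) - b * (a - v1) = ε := by linear_combination -hDvx
        have hpd2 : (p:ℤ) ∣ (a - v1) ∧ (p:ℤ) ∣ (b - t) := by
          refine pdvd_pair (l := l) hp _ _ hg ?_
          have h1 : ((Int.gcd (a - v1) (b - t) : ℕ):ℤ) ∣ a * (b - t) - b * (a - v1) :=
            dvd_sub ((Int.gcd_dvd_right (a - v1) (b - t)).mul_left a) ((Int.gcd_dvd_left (a - v1) (b - t)).mul_left b)
          rw [hD'] at h1
          have h2 : ((Int.gcd (a - v1) (b - t) : ℕ):ℤ) ∣ ((p^l:ℕ):ℤ) := by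
            rcases hε with h | h
            · rw [h] at h1; exact h1
            · rw [h] at h1; exact dvd_neg.mp h1
          exact_mod_cast h2
        have hpa : (p:ℤ) ∣ a := by
          have h3 := dvd_add hpd1.1 hpd2.1
          simpa using h3
        have hpb : (p:ℤ) ∣ b := by
          refine dvd_trans ?_ hNb
          have : (p:ℤ)^l = ((p^l:ℕ):ℤ) := by push_cast; ring
          rw [← this]
          exact dvd_pow_self _ (by omega)
        have hp1 : (p:ℤ) ∣ 1 := by
          rw [← hbez]
          exact dvd_add (hpa.mul_left a') (hpb.mul_left b')
        have hple := Int.le_of_dvd one_pos hp1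
        have := hp.two_le
        omega
      have hD' : a * (b - t) - b * (a - v1) = ε := by linear_combination -hDvx
      obtain ⟨n, P, hWD, hPn1, hDfin⟩ := key (a - v1) (b - t) (by linarith) (by linarith)
        hco' (dvd_sub hNb hNt) ε hε hD'
      refine ⟨n, P, hWD, hPn1, Or.inr ?_⟩
      intro u hu hDux
      have hDux' : a * u.1.2 - b * u.1.1 = -ε := hDux
      have hkey : b * (u.1.1 - v1) = a * (u.1.2 - t) := by linear_combination hDvx - hDux'
      have hbd : b ∣ (u.1.2 - t) := by
        have h2 : b ∣ a * (u.1.2 - t) := ⟨u.1.1 - v1, hkey.symm⟩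
        exact hcop2.symm.dvd_of_dvd_mul_left h2
      have hu0 : 0 ≤ u.1.2 := u.2.1
      have hub : u.1.2 < b := hu
      have hut : u.1.2 = t := by
        by_contra hne
        have h1 : 0 < |u.1.2 - t| := abs_pos.mpr (sub_ne_zero.mpr hne)
        have h2 : b ≤ |u.1.2 - t| := Int.le_of_dvd h1 ((dvd_abs _ _).mpr hbd)
        have h3 : |u.1.2 - t| < b := abs_lt.mpr ⟨by linarith, by linarith⟩
        linarith
      have hu1 : u.1.1 = v1 := by
        have h2 : b * (u.1.1 - v1) = 0 := by rw [hkey, hut]; ring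
        rcases mul_eq_zero.mp h2 with h3 | h3
        · exact absurd h3 hb0.ne'
        · linarith
      have hucop := u.2.2.1
      rw [hu1, hut] at hucop
      exact hco hucop

/-- For every prime `p`, every `l ∈ ℕ`, and every vertex
`x ≠ ∞` of `F_{p^l}`, there exists a well directed path from `∞` to `x`. -/
theorem stmt12 (p l : ℕ) (hp : p.Prime) (hl : 1 ≤ l) (x : X (p ^ l))
    (hx : x ≠ infty (p ^ l)) :
    ∃ (n : ℕ) (P : ℕ → X (p ^ l)),
      IsWellDirectedPath (p ^ l) n P ∧ P (n + 1) = x := by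
  obtain ⟨n, P, h1, h2, -⟩ := main p l hp hl (x.1.2.toNat) x hx
    (Int.toNat_of_nonneg x.2.1).symm ((p ^ l : ℕ) : ℤ) (Or.inl rfl)
  exact ⟨n, P, h1, h2⟩
end

section
/- Let N > 1 be a natural number, x ∈ X_N, and suppose ∞ = P_{−1} → P_0 → P_1 → ⋯ → P_n = x is a well directed path in F_N with P_i = p_i/q_i in lowest terms. Then P_0 = b/N for some integer b coprime to N, and there exist positive integers a_1, …, a_n and signs ε_1, …, ε_n ∈ {1,−1} such that the data (b, (a_i), (ε_i)) form a finite F_N-continued fraction whose i-th convergent equals P_i for every 0 ≤ i ≤ n; in particular its value is x. -/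
lemma keyEx (N : ℕ) (hN : 0 < N) (u1 u2 v1 v2 w1 w2 : ℤ)
    (hu : (N:ℤ) ∣ u2) (hw : (N:ℤ) ∣ w2)
    (hD : v1*u2 - v2*u1 = N ∨ v1*u2 - v2*u1 = -N)
    (hD' : w1*v2 - w2*v1 = N ∨ w1*v2 - w2*v1 = -N) :
    ∃ a ε : ℤ, (ε = 1 ∨ ε = -1) ∧ w1 = a*v1 + ε*u1 ∧ w2 = a*v2 + ε*u2 := by
  have hN0 : (N:ℤ) ≠ 0 := by positivity
  obtain ⟨c, hc⟩ : (N:ℤ) ∣ (w1*u2 - w2*u1) :=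
    dvd_sub (Dvd.dvd.mul_left hu w1) (Dvd.dvd.mul_right hw u1)
  rcases hD with h1 | h1 <;> rcases hD' with h2 | h2
  · exact ⟨c, -1, Or.inr rfl,
      mul_left_cancel₀ hN0 (by linear_combination (-w1)*h1 + v1*hc + (-u1)*h2),
      mul_left_cancel₀ hN0 (by linear_combination (-w2)*h1 + v2*hc + (-u2)*h2)⟩
  · exact ⟨c, 1, Or.inl rfl,
      mul_left_cancel₀ hN0 (by linear_combination (-w1)*h1 + v1*hc + (-u1)*h2),
      mul_left_cancel₀ hN0 (by linear_combination (-w2)*h1 + v2*hc + (-u2)*h2)⟩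
  · exact ⟨-c, 1, Or.inl rfl,
      mul_left_cancel₀ hN0 (by linear_combination w1*h1 + (-v1)*hc + u1*h2),
      mul_left_cancel₀ hN0 (by linear_combination w2*h1 + (-v2)*hc + u2*h2)⟩
  · exact ⟨-c, -1, Or.inr rfl,
      mul_left_cancel₀ hN0 (by linear_combination w1*h1 + (-v1)*hc + u1*h2),
      mul_left_cancel₀ hN0 (by linear_combination w2*h1 + (-v2)*hc + u2*h2)⟩

/-- If `∞ = P 0 → P 1 → ⋯ → P (n+1) = x` is a well directed
path in `F_N` (`N > 1`), then there is a finite `F_N`-continued fraction (data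
`b`, `(aᵢ)`, `(εᵢ)`) whose `i`-th convergent equals `Pᵢ` (paper index) for every
`0 ≤ i ≤ n`; in particular its value is `x`. -/
theorem stmt13 (N n : ℕ) (hN : 1 < N) (P : ℕ → X N)
    (hP : IsWellDirectedPath N n P) :
    ∃ F : FCF N n, ∀ i, i ≤ n →
      F.p (i + 1) = (P (i + 1)).1.1 ∧ F.q (i + 1) = (P (i + 1)).1.2 := by
  obtain ⟨h0, hadj, hmono, hwd⟩ := hP
  set pp : ℕ → ℤ := fun k => (P k).1.1 with hppdef
  set qq : ℕ → ℤ := fun k => (P k).1.2 with hqqdef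
  have hmem : ∀ k, 0 ≤ qq k ∧ IsCoprime (pp k) (qq k) ∧ (N:ℤ) ∣ qq k ∧ (qq k = 0 → pp k = 1) :=
    fun k => (P k).2
  have hqnn : ∀ k, 0 ≤ qq k := fun k => (hmem k).1
  have hqdvd : ∀ k, (N:ℤ) ∣ qq k := fun k => (hmem k).2.2.1
  have hcop : ∀ k, IsCoprime (pp k) (qq k) := fun k => (hmem k).2.1
  have hNpos : (0:ℤ) < N := by exact_mod_cast Nat.lt_of_lt_of_le Nat.zero_lt_one hN.le
  have hDet : ∀ j, j ≤ n → (pp (j+1) * qq j - qq (j+1) * pp j = N ∨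
      pp (j+1) * qq j - qq (j+1) * pp j = -N) := fun j hj => (hadj j hj).2
  have hq0 : qq 0 = 0 := by rw [hqqdef]; simp only [h0]; rfl
  have hp0 : pp 0 = 1 := by rw [hppdef]; simp only [h0]; rfl
  have hq1 : qq 1 = N := by
    have h := hDet 0 (Nat.zero_le n)
    rw [show (0:ℕ)+1 = 1 from rfl, hq0, hp0] at h
    have := hqnn 1
    rcases h with h | h <;> omega
  have hqmono : ∀ j, j ≤ n → qq j < qq (j+1) := hmono
  have hqpos : ∀ j, 1 ≤ j → j ≤ n + 1 → 0 < qq j := by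
    intro j h1 h2
    have h3 := hqmono (j-1) (by omega)
    have h4 := hqnn (j-1)
    have h5 : j - 1 + 1 = j := by omega
    rw [h5] at h3
    linarith
  -- existence of partial quotients
  have hex : ∀ i : ℕ, ∃ aε : ℤ × ℤ, 1 ≤ i → i ≤ n →
      (aε.2 = 1 ∨ aε.2 = -1) ∧ pp (i+1) = aε.1 * pp i + aε.2 * pp (i-1) ∧
        qq (i+1) = aε.1 * qq i + aε.2 * qq (i-1) := by
    intro i
    by_cases hi : 1 ≤ i ∧ i ≤ n
    · have hD1 := hDet (i-1) (by omega)
      rw [Nat.sub_add_cancel hi.1] at hD1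
      have hD2 := hDet i hi.2
      obtain ⟨a, ε, hε, h1, h2⟩ := keyEx N (by omega) (pp (i-1)) (qq (i-1)) (pp i) (qq i)
        (pp (i+1)) (qq (i+1)) (hqdvd _) (hqdvd _) hD1 hD2
      exact ⟨(a, ε), fun _ _ => ⟨hε, h1, h2⟩⟩
    · exact ⟨(1, 1), fun ha hb => absurd ⟨ha, hb⟩ hi⟩
  choose z hz using hex
  have hεpm : ∀ i, 1 ≤ i → i ≤ n → (z i).2 = 1 ∨ (z i).2 = -1 := fun i h1 h2 => (hz i h1 h2).1
  have hA1 : ∀ i, 1 ≤ i → i ≤ n → 1 ≤ (z i).1 := by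
    intro i h1 h2
    obtain ⟨hε, -, hq⟩ := hz i h1 h2
    have hqi : 0 < qq i := hqpos i h1 (by omega)
    have hqi1 : qq i < qq (i+1) := hqmono i h2
    have hqim : qq (i-1) < qq i := by
      have h3 := hqmono (i-1) (by omega)
      have h5 : i - 1 + 1 = i := by omega
      rwa [h5] at h3
    have hqimn : 0 ≤ qq (i-1) := hqnn _
    by_contra h'
    push_neg at h'
    have hle : (z i).1 * qq i ≤ 0 := mul_nonpos_of_nonpos_of_nonneg (by omega) hqi.le
    rcases hε with h | h <;> rw [h] at hq <;> linarith
  have hcond2 : ∀ i, 1 ≤ i → i ≤ n → 1 ≤ (z i).1 + (z i).2 := by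
    intro i h1 h2
    obtain ⟨hε, -, hq⟩ := hz i h1 h2
    have hA := hA1 i h1 h2
    rcases hε with h | h
    · omega
    · rw [h] at hq ⊢
      have hqi : 0 < qq i := hqpos i h1 (by omega)
      have hqi1 : qq i < qq (i+1) := hqmono i h2
      have hqimn : 0 ≤ qq (i-1) := hqnn _
      by_contra h'
      have ha1 : (z i).1 = 1 := by omega
      rw [ha1] at hq
      linarith
  -- comparison of values
  have hflt : ∀ k l : ℕ, 0 < qq k → 0 < qq l →
      (fval (P k) < fval (P l) ↔ pp k * qq l < pp l * qq k) := by
    intro k l hk hl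
    rw [fval, fval, div_lt_div_iff₀ (by exact_mod_cast hk) (by exact_mod_cast hl)]
    exact_mod_cast Iff.rfl
  have hcond1 : ∀ i, 1 ≤ i → i < n → 1 ≤ (z i).1 + (z (i+1)).2 := by
    intro i h1 h2
    obtain ⟨j, rfl⟩ : ∃ j, i = j + 1 := ⟨i - 1, by omega⟩
    by_contra hcon
    rw [show j+1+1 = j+2 from rfl] at hcon
    have hA := hA1 (j+1) h1 h2.le
    have hε2 := hεpm (j+2) (by omega) (by omega)
    have hε2' : (z (j+2)).2 = -1 := by rcases hε2 with h | h <;> omega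
    have hA' : (z (j+1)).1 = 1 := by omega
    obtain ⟨hε1pm, hp1', hq1'⟩ := hz (j+1) h1 h2.le
    obtain ⟨-, hp2', hq2'⟩ := hz (j+2) (by omega) (by omega)
    have e1 : j + 1 - 1 = j := rfl
    have e2 : j + 2 - 1 = j + 1 := rfl
    rw [e1, hA'] at hp1' hq1'
    rw [e2, hε2'] at hp2' hq2'
    have hDj := hDet j (by omega)
    have hadj2 : (FareyGraph N).Adj (P j) (P (j+2)) := by
      constructor
      · intro hE
        have h5 : qq j < qq (j+2) := lt_trans (hqmono j (by omega)) (hqmono (j+1) (by omega))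
        have h6 : qq j = qq (j+2) := congrArg (fun v => v.1.2) hE
        omega
      · rcases hDj with h | h
        · exact Or.inl (by linear_combination qq j * hp1' - pp j * hq1' + h)
        · exact Or.inr (by linear_combination qq j * hp1' - pp j * hq1' + h)
    have hwdc := hwd j (by omega) hadj2
    have hq1p : 0 < qq (j+1) := hqpos _ (by omega) (by omega)
    have hq2p : 0 < qq (j+2) := hqpos _ (by omega) (by omega)
    have hq3p : 0 < qq (j+3) := hqpos _ (by omega) (by omega)
    have hDeq : pp (j+3) * qq (j+2) - qq (j+3) * pp (j+2)
        = pp (j+2) * qq (j+1) - qq (j+2) * pp (j+1) := by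
      linear_combination qq (j+2) * hp2' - pp (j+2) * hq2'
    rcases hwdc with ⟨hlt1, hlt2⟩ | ⟨hlt1, hlt2⟩
    · have h12 : fval (P (j+1)) < fval (P (j+2)) := lt_trans hlt1 hlt2
      rw [hflt _ _ hq1p hq2p] at h12
      rw [hflt _ _ hq3p hq2p] at hlt2
      nlinarith [hDeq, h12, hlt2]
    · have h12 : fval (P (j+2)) < fval (P (j+1)) := lt_trans hlt1 hlt2
      rw [hflt _ _ hq2p hq1p] at h12
      rw [hflt _ _ hq2p hq3p] at hlt1
      nlinarith [hDeq, h12, hlt1]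
  refine ⟨⟨pp 1, fun i => (z i).1, fun i => (z i).2, pp, qq, ?_, hp0, hq0, rfl, hq1,
      hA1, hεpm, fun i h1 h2 => (hz i h1 h2).2.1, fun i h1 h2 => (hz i h1 h2).2.2,
      hcond1, hcond2, fun i _ _ => hcop (i+1)⟩, fun i _ => ⟨rfl, rfl⟩⟩
  have := hcop 1
  rwa [hq1] at this
end

section
/- For every l ∈ ℕ and every x ∈ X_{2^l} with x ≠ ∞, there exists exactly one finite F_{2^l}-continued fraction whose value is x. -/
namespace FareyCFAux

lemma odd_of_coprime_even {p q : ℤ} (h : IsCoprime p q) (hq : (2:ℤ) ∣ q) : Odd p := by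
  rcases Int.even_or_odd p with he | ho
  · exfalso
    have := IsCoprime.isUnit_of_dvd' h he.two_dvd hq
    rw [Int.isUnit_iff] at this
    omega
  · exact ho

variable {l n : ℕ} (F : FCF (2 ^ l) n)

lemma hq1' : F.q 1 = 2 ^ l := by rw [F.hq1]; push_cast; ring

lemma qdvd : ∀ j, j ≤ n + 1 → (2 ^ l : ℤ) ∣ F.q j := by
  intro j
  induction j using Nat.strong_induction_on with
  | _ j ih =>
    match j with
    | 0 => intro _; rw [F.hq0]; exact dvd_zero _
    | 1 => intro _; rw [hq1']
    | (i+2) =>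
      intro hj
      rw [show i + 2 = (i+1) + 1 from rfl, F.hrecq (i+1) (by omega) (by omega)]
      exact dvd_add (Dvd.dvd.mul_left (ih (i+1) (by omega) (by omega)) _)
        (Dvd.dvd.mul_left (ih i (by omega) (by omega)) _)

lemma pqcop : ∀ j, j ≤ n + 1 → IsCoprime (F.p j) (F.q j) := by
  intro j hj
  match j with
  | 0 => rw [F.hp0]; exact isCoprime_one_left
  | 1 => rw [F.hp1, F.hq1]; exact F.hb
  | (i+2) => exact F.cond3 (i+1) (by omega) (by omega)

lemma podd (hl : 1 ≤ l) : ∀ j, j ≤ n + 1 → Odd (F.p j) := by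
  intro j hj
  refine odd_of_coprime_even (pqcop F j hj) (dvd_trans ?_ (qdvd F j hj))
  exact dvd_pow_self 2 (by omega)

lemma aeven (hl : 1 ≤ l) : ∀ i, 1 ≤ i → i ≤ n → Even (F.a i) := by
  intro i h1 h2
  have hp := F.hrecp i h1 h2
  have o1 := podd F hl (i+1) (by omega)
  have o2 := podd F hl i (by omega)
  have o3 := podd F hl (i-1) (by omega)
  have oε : Odd (F.ε i) := by rcases F.hε i h1 h2 with h | h <;> rw [h] <;> decide
  have : Even (F.a i * F.p i) := by
    have : F.a i * F.p i = F.p (i+1) - F.ε i * F.p (i-1) := by omega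
    rw [this]
    exact o1.sub_odd (oε.mul o3)
  rcases Int.even_mul.mp this with h | h
  · exact h
  · exact absurd o2 (Int.not_odd_iff_even.mpr h)

lemma a2 (hl : 1 ≤ l) : ∀ i, 1 ≤ i → i ≤ n → 2 ≤ F.a i := by
  intro i h1 h2
  have h3 := F.ha i h1 h2
  obtain ⟨r, hr⟩ := aeven F hl i h1 h2
  omega

lemma qmono (hl : 1 ≤ l) : ∀ j, j ≤ n → 0 ≤ F.q j ∧ F.q j < F.q (j + 1) := by
  intro j
  induction j using Nat.strong_induction_on with
  | _ j ih =>
    match j with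
    | 0 => intro _; rw [F.hq0, hq1']; exact ⟨le_refl 0, by positivity⟩
    | (i+1) =>
      intro hj
      obtain ⟨h0, h1⟩ := ih i (by omega) (by omega)
      have h0' : 0 ≤ F.q (i+1) := le_of_lt (lt_of_le_of_lt h0 h1)
      refine ⟨h0', ?_⟩
      rw [F.hrecq (i+1) (by omega) (by omega)]
      have ha := a2 F hl (i+1) (by omega) (by omega)
      simp only [Nat.add_sub_cancel]
      rcases F.hε (i+1) (by omega) (by omega) with h | h <;> rw [h] <;> nlinarith

lemma q1le (hl : 1 ≤ l) : ∀ j, 1 ≤ j → j ≤ n + 1 → (2 ^ l : ℤ) ≤ F.q j := by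
  intro j h1
  induction j, h1 using Nat.le_induction with
  | base => intro _; rw [hq1']
  | succ i hi ihn =>
    intro h2
    have := (qmono F hl i (by omega)).2
    have := ihn (by omega)
    omega

lemma qlt (hl : 1 ≤ l) : ∀ j k, j < k → k ≤ n + 1 → F.q j < F.q k := by
  intro j k hjk
  have hjk' : j + 1 ≤ k := hjk
  induction k, hjk' using Nat.le_induction with
  | base => intro hk; exact (qmono F hl j (by omega)).2
  | succ i hi ihn =>
    intro hk
    have h2 := (qmono F hl i (by omega)).2
    rcases Nat.lt_or_ge (j+1) i with h | h
    · exact lt_trans (ihn (by omega) (by omega)) h2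
    · have hji : j + 1 = i := by omega
      have e1 : F.q j < F.q i := by rw [← hji]; exact (qmono F hl j (by omega)).2
      exact lt_trans e1 h2

lemma qtoppos (hl : 1 ≤ l) : 0 < F.q (n + 1) := by
  have := q1le F hl (n+1) (by omega) (le_refl _)
  have : (0:ℤ) < 2 ^ l := by positivity
  omega

lemma dete : ∀ j, j ≤ n →
    F.p (j+1) * F.q j - F.q (j+1) * F.p j = 2 ^ l ∨
    F.p (j+1) * F.q j - F.q (j+1) * F.p j = -2 ^ l := by
  intro j
  induction j using Nat.strong_induction_on with
  | _ j ih =>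
    match j with
    | 0 =>
      intro _
      right
      rw [F.hp0, F.hq0, F.hp1, hq1']
      ring
    | (i+1) =>
      intro hj
      have hp := F.hrecp (i+1) (by omega) (by omega)
      have hq := F.hrecq (i+1) (by omega) (by omega)
      simp only [Nat.add_sub_cancel] at hp hq
      rcases F.hε (i+1) (by omega) (by omega) with h | h <;>
        rcases ih i (by omega) (by omega) with d | d
      · right; rw [h] at hp hq; linear_combination F.q (i+1) * hp - F.p (i+1) * hq - d
      · left; rw [h] at hp hq; linear_combination F.q (i+1) * hp - F.p (i+1) * hq - d
      · left; rw [h] at hp hq; linear_combination F.q (i+1) * hp - F.p (i+1) * hq + d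
      · right; rw [h] at hp hq; linear_combination F.q (i+1) * hp - F.p (i+1) * hq + d

lemma int_eq_zero_of_dvd_of_lt {q d : ℤ} (h : q ∣ d) (h1 : -q < d) (h2 : d < q) : d = 0 := by
  rcases h with ⟨k, hk⟩
  subst hk
  rcases lt_trichotomy k 0 with h | h | h
  · nlinarith
  · rw [h, mul_zero]
  · nlinarith

lemma descend_unique {l : ℕ} (hl : 1 ≤ l) {p q r s r' s' δ δ' : ℤ}
    (hδ : δ = 1 ∨ δ = -1) (hδ' : δ' = 1 ∨ δ' = -1)
    (hcop : IsCoprime p q) (hpodd : Odd p) (hrodd : Odd r) (hrodd' : Odd r')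
    (hs : 0 ≤ s) (hsq : s < q) (hs' : 0 ≤ s') (hs'q : s' < q)
    (h : p * s - q * r = δ * 2 ^ l) (h' : p * s' - q * r' = δ' * 2 ^ l)
    (hz : s = 0 → r = 1) (hz' : s' = 0 → r' = 1) :
    r = r' ∧ s = s' := by
  have hqpos : 0 < q := lt_of_le_of_lt hs hsq
  have hN : (0:ℤ) < 2 ^ l := by positivity
  rcases eq_or_ne δ δ' with he | he
  · -- same sign
    have key : p * (s - s') = q * (r - r') := by
      rw [he] at h; linear_combination h - h'
    have hd : q ∣ (s - s') :=
      (hcop.symm).dvd_of_dvd_mul_left ⟨r - r', key⟩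
    have hss : s - s' = 0 := int_eq_zero_of_dvd_of_lt hd (by omega) (by omega)
    have hs0 : s = s' := by omega
    refine ⟨?_, hs0⟩
    have : q * (r - r') = 0 := by rw [← key, hss, mul_zero]
    have := mul_eq_zero.mp this
    omega
  · -- opposite signs
    have hee : δ' = -δ := by rcases hδ with h1 | h1 <;> rcases hδ' with h2 | h2 <;> omega
    have key : p * (s + s') = q * (r + r') := by
      rw [hee] at h'; linear_combination h + h'
    have hd : q ∣ (s + s') :=
      (hcop.symm).dvd_of_dvd_mul_left ⟨r + r', key⟩
    have hss : s + s' = 0 ∨ s + s' = q := by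
      rcases hd with ⟨k, hk⟩
      have hk01 : k = 0 ∨ k = 1 := by
        rcases lt_trichotomy k 0 with hh | hh | hh
        · nlinarith
        · left; exact hh
        · rcases lt_or_ge 1 k with h2 | h2
          · nlinarith
          · right; omega
      rcases hk01 with h1 | h1 <;> rw [h1] at hk <;> simp at hk <;> omega
    rcases hss with h0 | h0
    · exfalso
      have hs00 : s = 0 := by omega
      have hs01 : s' = 0 := by omega
      have hr1 := hz hs00
      have hr1' := hz' hs01
      rw [hs00, hr1] at h
      rw [hs01, hr1', hee] at h'
      rcases hδ with h1 | h1 <;> rw [h1] at h h' <;> omega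
    · exfalso
      have hpq : p * q = q * (r + r') := by rw [h0] at key; exact key
      have hp : p = r + r' := by
        have := mul_right_cancel₀ (ne_of_gt hqpos) (by linarith [hpq] : p * q = (r + r') * q)
        exact this
      have : Even (r + r') := hrodd.add_odd hrodd'
      rw [← hp] at this
      exact (Int.not_odd_iff_even.mpr this) hpodd

lemma coeff_unique {a e a' e' p1 q1 p0 q0 P Q : ℤ}
    (hD : p1 * q0 - q1 * p0 ≠ 0) (h00 : p0 ≠ 0 ∨ q0 ≠ 0)
    (h1 : P = a * p1 + e * p0) (h2 : Q = a * q1 + e * q0)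
    (h1' : P = a' * p1 + e' * p0) (h2' : Q = a' * q1 + e' * q0) :
    a = a' ∧ e = e' := by
  have key : (a - a') * (p1 * q0 - q1 * p0) = 0 := by
    linear_combination q0 * h1' - q0 * h1 - p0 * h2' + p0 * h2
  have haa : a = a' := by
    rcases mul_eq_zero.mp key with h | h
    · omega
    · exact absurd h hD
  subst haa
  have e1 : (e - e') * p0 = 0 := by linear_combination h1' - h1
  have e2 : (e - e') * q0 = 0 := by linear_combination h2' - h2
  rcases h00 with h | h
  · rcases mul_eq_zero.mp e1 with hh | hh
    · exact ⟨rfl, by omega⟩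
    · exact absurd hh h
  · rcases mul_eq_zero.mp e2 with hh | hh
    · exact ⟨rfl, by omega⟩
    · exact absurd hh h

lemma frac_eq {p q p' q' : ℤ} (hq : 0 < q) (hq' : 0 < q')
    (hc : IsCoprime p q) (hc' : IsCoprime p' q')
    (h : (p : ℚ) / (q : ℚ) = (p' : ℚ) / (q' : ℚ)) : p = p' ∧ q = q' := by
  have hqQ : (q : ℚ) ≠ 0 := by exact_mod_cast ne_of_gt hq
  have hq'Q : (q' : ℚ) ≠ 0 := by exact_mod_cast ne_of_gt hq'
  rw [div_eq_div_iff hqQ hq'Q] at h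
  have hZ : p * q' = p' * q := by exact_mod_cast h
  have d1 : q ∣ q' := hc.symm.dvd_of_dvd_mul_left ⟨p', by linarith [hZ]⟩
  have d2 : q' ∣ q := hc'.symm.dvd_of_dvd_mul_left ⟨p, by linarith [hZ]⟩
  have hqq : q = q' := Int.dvd_antisymm (le_of_lt hq) (le_of_lt hq') d1 d2
  subst hqq
  exact ⟨mul_right_cancel₀ (by exact_mod_cast ne_of_gt hq) hZ, rfl⟩

/-- truncation of a continued fraction -/
def trunc {N n : ℕ} (F : FCF N (n + 1)) : FCF N n where
  b := F.b
  a := F.a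
  ε := F.ε
  p := F.p
  q := F.q
  hb := F.hb
  hp0 := F.hp0
  hq0 := F.hq0
  hp1 := F.hp1
  hq1 := F.hq1
  ha := fun i h1 h2 => F.ha i h1 (by omega)
  hε := fun i h1 h2 => F.hε i h1 (by omega)
  hrecp := fun i h1 h2 => F.hrecp i h1 (by omega)
  hrecq := fun i h1 h2 => F.hrecq i h1 (by omega)
  cond1 := fun i h1 h2 => F.cond1 i h1 (by omega)
  cond2 := fun i h1 h2 => F.cond2 i h1 (by omega)
  cond3 := fun i h1 h2 => F.cond3 i h1 (by omega)

lemma not_both_zero {p q : ℤ} (h : IsCoprime p q) : p ≠ 0 ∨ q ≠ 0 := by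
  by_contra hc
  push_neg at hc
  rw [hc.1, hc.2] at h
  rcases h with ⟨u, v, huv⟩
  simp at huv

lemma cf_unique (l : ℕ) (hl : 1 ≤ l) :
    ∀ n n' : ℕ, ∀ (F : FCF (2 ^ l) n) (F' : FCF (2 ^ l) n'),
      F.p (n + 1) = F'.p (n' + 1) → F.q (n + 1) = F'.q (n' + 1) →
      n = n' ∧ (∀ j, j ≤ n + 1 → F.p j = F'.p j ∧ F.q j = F'.q j) := by
  intro n
  induction n using Nat.strong_induction_on with
  | _ n ih =>
    intro n' F F' hp hq
    match n, n' with
    | 0, 0 =>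
      refine ⟨rfl, ?_⟩
      intro j hj
      match j with
      | 0 => rw [F.hp0, F'.hp0, F.hq0, F'.hq0]; exact ⟨rfl, rfl⟩
      | 1 => exact ⟨hp, hq⟩
    | 0, (m'+1) =>
      exfalso
      have h1 : F.q 1 = 2 ^ l := hq1' F
      have h2 : (2:ℤ) ^ l < F'.q (m' + 1 + 1) := by
        have := qlt F' hl 1 (m' + 1 + 1) (by omega) (by omega)
        rw [hq1' F'] at this
        exact this
      rw [← hq, h1] at h2
      omega
    | (m+1), 0 =>
      exfalso
      have h1 : F'.q 1 = 2 ^ l := hq1' F'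
      have h2 : (2:ℤ) ^ l < F.q (m + 1 + 1) := by
        have := qlt F hl 1 (m + 1 + 1) (by omega) (by omega)
        rw [hq1' F] at this
        exact this
      rw [hq, h1] at h2
      omega
    | (m+1), (m'+1) =>
      -- both lengths positive; use descent uniqueness at the top
      obtain hd := dete F (m+1) (le_refl _)
      obtain hd' := dete F' (m'+1) (le_refl _)
      have hNpos : (0:ℤ) < 2 ^ l := by positivity
      have step : F.p (m+1) = F'.p (m'+1) ∧ F.q (m+1) = F'.q (m'+1) := by
        have hcop := pqcop F (m+1+1) (le_refl _)
        have hpodd := podd F hl (m+1+1) (le_refl _)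
        have hrodd := podd F hl (m+1) (by omega)
        have hrodd' := podd F' hl (m'+1) (by omega)
        have hs : 0 ≤ F.q (m+1) := (qmono F hl (m+1) (by omega)).1
        have hsq : F.q (m+1) < F.q (m+1+1) := (qmono F hl (m+1) (by omega)).2
        have hs' : 0 ≤ F'.q (m'+1) := (qmono F' hl (m'+1) (by omega)).1
        have hs'q : F'.q (m'+1) < F.q (m+1+1) := by
          rw [hq]; exact (qmono F' hl (m'+1) (by omega)).2
        have hz : F.q (m+1) = 0 → F.p (m+1) = 1 := by
          intro h0
          exfalso
          have := q1le F hl (m+1) (by omega) (by omega)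
          omega
        have hz' : F'.q (m'+1) = 0 → F'.p (m'+1) = 1 := by
          intro h0
          exfalso
          have := q1le F' hl (m'+1) (by omega) (by omega)
          omega
        -- rewrite determinants into edge form
        rcases hd with hd1 | hd1 <;> rcases hd' with hd2 | hd2
        · exact descend_unique hl (δ := 1) (δ' := 1) (Or.inl rfl) (Or.inl rfl)
            hcop hpodd hrodd hrodd' hs hsq hs' hs'q
            (by linear_combination hd1) (by rw [hp, hq]; linear_combination hd2) hz hz'
        · exact descend_unique hl (δ := 1) (δ' := -1) (Or.inl rfl) (Or.inr rfl)
            hcop hpodd hrodd hrodd' hs hsq hs' hs'q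
            (by linear_combination hd1) (by rw [hp, hq]; linear_combination hd2) hz hz'
        · exact descend_unique hl (δ := -1) (δ' := 1) (Or.inr rfl) (Or.inl rfl)
            hcop hpodd hrodd hrodd' hs hsq hs' hs'q
            (by linear_combination hd1) (by rw [hp, hq]; linear_combination hd2) hz hz'
        · exact descend_unique hl (δ := -1) (δ' := -1) (Or.inr rfl) (Or.inr rfl)
            hcop hpodd hrodd hrodd' hs hsq hs' hs'q
            (by linear_combination hd1) (by rw [hp, hq]; linear_combination hd2) hz hz'
      -- apply induction hypothesis to truncations
      obtain ⟨hmm', hvert⟩ := ih m (by omega) m' (trunc F) (trunc F') step.1 step.2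
      refine ⟨by omega, ?_⟩
      intro j hj
      rcases Nat.lt_or_ge j (m + 2) with hjlt | hjge
      · exact hvert j (by omega)
      · have hj2 : j = m + 2 := by omega
        rw [hj2]
        exact ⟨hp.trans (congrArg F'.p (by omega)), hq.trans (congrArg F'.q (by omega))⟩

lemma coprime_of_edge {l : ℕ} {p q r s : ℤ}
    (h : p * s - q * r = 2 ^ l ∨ p * s - q * r = -2 ^ l) (hr : Odd r) :
    IsCoprime r s := by
  rw [Int.isCoprime_iff_gcd_eq_one]
  set d := Int.gcd r s with hd
  have hdr : (d : ℤ) ∣ r := Int.gcd_dvd_left r s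
  have hds : (d : ℤ) ∣ s := Int.gcd_dvd_right r s
  have hdN : (d : ℤ) ∣ 2 ^ l := by
    rcases h with h | h
    · rw [← h]; exact dvd_sub (hds.mul_left p) (hdr.mul_left q)
    · have : (d:ℤ) ∣ (p * s - q * r) := dvd_sub (hds.mul_left p) (hdr.mul_left q)
      rw [h] at this
      exact (dvd_neg.mp this)
  have hdN' : d ∣ 2 ^ l := by
    have : (d : ℤ) ∣ ((2 ^ l : ℕ) : ℤ) := by push_cast; exact hdN
    exact_mod_cast this
  obtain ⟨k, hk, hke⟩ := (Nat.dvd_prime_pow Nat.prime_two).mp hdN'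
  rcases Nat.eq_zero_or_pos k with h0 | h0
  · rw [hke, h0, pow_zero]
  · exfalso
    have h2d : (2:ℤ) ∣ (d:ℤ) := by
      rw [hke]; push_cast
      exact dvd_pow_self 2 (by omega)
    have : (2:ℤ) ∣ r := dvd_trans h2d hdr
    rcases hr with ⟨t, ht⟩
    omega

lemma descend_exists {l : ℕ} (hl : 1 ≤ l) {p q : ℤ} (hq : 2 ^ l < q)
    (hcop : IsCoprime p q) (hdvd : (2 ^ l : ℤ) ∣ q) :
    ∃ r s : ℤ, 0 < s ∧ s < q ∧ (2 ^ l : ℤ) ∣ s ∧ IsCoprime r s ∧ Odd r ∧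
      (p * s - q * r = 2 ^ l ∨ p * s - q * r = -2 ^ l) := by
  have hN : (0:ℤ) < 2 ^ l := by positivity
  have hqpos : (0:ℤ) < q := by omega
  have hpodd : Odd p := odd_of_coprime_even hcop
    (dvd_trans (dvd_pow_self 2 (by omega : l ≠ 0)) hdvd)
  obtain ⟨u, v, huv⟩ := hcop
  set c : ℤ := (2 ^ l * u) / q with hc
  set s₀ : ℤ := (2 ^ l * u) % q with hs₀
  have hs₀eq : s₀ = 2 ^ l * u - q * c := by rw [hs₀, hc, Int.emod_def]
  set r₀ : ℤ := -(2 ^ l) * v - p * c with hr₀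
  have hedge : p * s₀ - q * r₀ = 2 ^ l := by
    rw [hs₀eq, hr₀]
    linear_combination (2:ℤ) ^ l * huv
  have hs₀nn : 0 ≤ s₀ := Int.emod_nonneg _ (ne_of_gt hqpos)
  have hs₀lt : s₀ < q := Int.emod_lt_of_pos _ hqpos
  have hs₀dvd : (2 ^ l : ℤ) ∣ s₀ := by
    rw [hs₀eq]
    exact dvd_sub (Dvd.dvd.mul_right dvd_rfl u) (hdvd.mul_right c)
  have hs₀pos : 0 < s₀ := by
    rcases lt_or_eq_of_le hs₀nn with h | h
    · exact h
    · exfalso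
      rw [← h] at hedge
      have : q ∣ 2 ^ l := ⟨-r₀, by linarith [hedge]⟩
      have := Int.le_of_dvd hN this
      omega
  rcases Int.even_or_odd r₀ with he | ho
  · -- use the mirrored candidate
    refine ⟨p - r₀, q - s₀, by omega, by omega, ?_, ?_, ?_, ?_⟩
    · exact dvd_sub hdvd hs₀dvd
    · refine coprime_of_edge (l := l) (p := p) (q := q) ?_ ?_
      · right; linear_combination -hedge
      · rcases he with ⟨t, ht⟩
        rcases hpodd with ⟨w, hw⟩
        exact ⟨w - t, by omega⟩
    · rcases he with ⟨t, ht⟩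
      rcases hpodd with ⟨w, hw⟩
      exact ⟨w - t, by omega⟩
    · right; linear_combination -hedge
  · exact ⟨r₀, s₀, hs₀pos, hs₀lt, hs₀dvd, coprime_of_edge (Or.inl hedge) ho, ho,
      Or.inl hedge⟩

lemma extend {l n : ℕ} (hl : 1 ≤ l) (F : FCF (2 ^ l) n) {p q : ℤ}
    (hcop : IsCoprime p q) (hdvd : (2 ^ l : ℤ) ∣ q) (hq : F.q (n + 1) < q)
    (hedge : p * F.q (n + 1) - q * F.p (n + 1) = 2 ^ l ∨
             p * F.q (n + 1) - q * F.p (n + 1) = -2 ^ l) :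
    ∃ G : FCF (2 ^ l) (n + 1), G.p (n + 2) = p ∧ G.q (n + 2) = q := by
  have hN : (0:ℤ) < 2 ^ l := by positivity
  have hNne : (2:ℤ) ^ l ≠ 0 := ne_of_gt hN
  obtain ⟨a₀, hC⟩ : ∃ a₀ : ℤ, p * F.q n - F.p n * q = 2 ^ l * a₀ := by
    obtain ⟨k, hk⟩ := dvd_sub ((qdvd F n (by omega)).mul_left p) (hdvd.mul_left (F.p n))
    exact ⟨k, hk⟩
  have hD := dete F n (le_refl _)
  have key : ∃ aa ee : ℤ, (ee = 1 ∨ ee = -1) ∧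
      p = aa * F.p (n + 1) + ee * F.p n ∧ q = aa * F.q (n + 1) + ee * F.q n := by
    rcases hedge with hE | hE <;> rcases hD with hD | hD
    · refine ⟨a₀, -1, Or.inr rfl, ?_, ?_⟩
      · refine mul_left_cancel₀ hNne ?_
        linear_combination (-(F.p n)) * hE - p * hD + F.p (n+1) * hC
      · refine mul_left_cancel₀ hNne ?_
        linear_combination (-(F.q n)) * hE - q * hD + F.q (n+1) * hC
    · refine ⟨-a₀, 1, Or.inl rfl, ?_, ?_⟩
      · refine mul_left_cancel₀ hNne ?_
        linear_combination (F.p n) * hE + p * hD - F.p (n+1) * hC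
      · refine mul_left_cancel₀ hNne ?_
        linear_combination (F.q n) * hE + q * hD - F.q (n+1) * hC
    · refine ⟨a₀, 1, Or.inl rfl, ?_, ?_⟩
      · refine mul_left_cancel₀ hNne ?_
        linear_combination (-(F.p n)) * hE - p * hD + F.p (n+1) * hC
      · refine mul_left_cancel₀ hNne ?_
        linear_combination (-(F.q n)) * hE - q * hD + F.q (n+1) * hC
    · refine ⟨-a₀, -1, Or.inr rfl, ?_, ?_⟩
      · refine mul_left_cancel₀ hNne ?_
        linear_combination (F.p n) * hE + p * hD - F.p (n+1) * hC
      · refine mul_left_cancel₀ hNne ?_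
        linear_combination (F.q n) * hE + q * hD - F.q (n+1) * hC
  obtain ⟨aa, ee, hee, hP, hQ⟩ := key
  have hs2 : 0 ≤ F.q n := (qmono F hl n (by omega)).1
  have hss : F.q n < F.q (n + 1) := (qmono F hl n (by omega)).2
  have haa : 1 ≤ aa := by
    by_contra hcon
    push_neg at hcon
    rcases hee with h | h <;> rw [h] at hQ <;> nlinarith
  have haae : 1 ≤ aa + ee := by
    rcases hee with h | h
    · omega
    · rw [h] at hQ ⊢
      by_contra hcon
      push_neg at hcon
      have : aa = 1 := by omega
      rw [this] at hQ
      omega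
  refine ⟨{
    b := F.b
    a := fun i => if i = n + 1 then aa else F.a i
    ε := fun i => if i = n + 1 then ee else F.ε i
    p := fun j => if j = n + 2 then p else F.p j
    q := fun j => if j = n + 2 then q else F.q j
    hb := F.hb
    hp0 := by beta_reduce; rw [if_neg (by omega)]; exact F.hp0
    hq0 := by beta_reduce; rw [if_neg (by omega)]; exact F.hq0
    hp1 := by beta_reduce; rw [if_neg (by omega)]; exact F.hp1
    hq1 := by beta_reduce; rw [if_neg (by omega)]; exact F.hq1
    ha := by
      intro i h1 h2
      beta_reduce
      by_cases hi : i = n + 1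
      · rw [if_pos hi]; exact haa
      · rw [if_neg hi]; exact F.ha i h1 (by omega)
    hε := by
      intro i h1 h2
      beta_reduce
      by_cases hi : i = n + 1
      · rw [if_pos hi]; exact hee
      · rw [if_neg hi]; exact F.hε i h1 (by omega)
    hrecp := by
      intro i h1 h2
      beta_reduce
      by_cases hi : i = n + 1
      · subst hi
        have e1 : ¬(n + 1 = n + 2) := by omega
        have e2 : ¬(n = n + 2) := by omega
        simp only [Nat.add_sub_cancel, e1, e2, if_true, if_false, ite_true, ite_false,
          reduceIte]
        exact hP
      · rw [if_neg (by omega : ¬ i + 1 = n + 2), if_neg hi,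
          if_neg (by omega : ¬ i = n + 2), if_neg (by omega : ¬ i - 1 = n + 2), if_neg hi]
        exact F.hrecp i h1 (by omega)
    hrecq := by
      intro i h1 h2
      beta_reduce
      by_cases hi : i = n + 1
      · subst hi
        have e1 : ¬(n + 1 = n + 2) := by omega
        have e2 : ¬(n = n + 2) := by omega
        simp only [Nat.add_sub_cancel, e1, e2, if_true, if_false, ite_true, ite_false,
          reduceIte]
        exact hQ
      · rw [if_neg (by omega : ¬ i + 1 = n + 2), if_neg hi,
          if_neg (by omega : ¬ i = n + 2), if_neg (by omega : ¬ i - 1 = n + 2), if_neg hi]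
        exact F.hrecq i h1 (by omega)
    cond1 := by
      intro i h1 h2
      beta_reduce
      by_cases hi : i = n
      · subst hi
        rw [if_neg (by omega), if_pos rfl]
        have h2i : 2 ≤ F.a i := a2 F hl i h1 (le_refl _)
        rcases hee with h | h <;> omega
      · rw [if_neg (by omega), if_neg (by omega)]
        exact F.cond1 i h1 (by omega)
    cond2 := by
      intro i h1 h2
      beta_reduce
      by_cases hi : i = n + 1
      · rw [if_pos hi, if_pos hi]; exact haae
      · rw [if_neg hi, if_neg hi]; exact F.cond2 i h1 (by omega)
    cond3 := by
      intro i h1 h2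
      beta_reduce
      by_cases hi : i = n + 1
      · subst hi
        rw [if_pos rfl, if_pos rfl]
        exact hcop
      · rw [if_neg (by omega), if_neg (by omega)]
        exact F.cond3 i h1 (by omega)
  }, ?_, ?_⟩
  · simp
  · simp

def baseCF (l : ℕ) (p : ℤ) (h : IsCoprime p ((2 ^ l : ℕ) : ℤ)) : FCF (2 ^ l) 0 where
  b := p
  a := fun _ => 1
  ε := fun _ => 1
  p := fun j => if j = 0 then 1 else p
  q := fun j => if j = 0 then 0 else ((2 ^ l : ℕ) : ℤ)
  hb := h
  hp0 := by simp
  hq0 := by simp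
  hp1 := by simp
  hq1 := by simp
  ha := by intro i h1 h2; omega
  hε := by intro i h1 h2; omega
  hrecp := by intro i h1 h2; omega
  hrecq := by intro i h1 h2; omega
  cond1 := by intro i h1 h2; omega
  cond2 := by intro i h1 h2; omega
  cond3 := by intro i h1 h2; omega

lemma exist_cf (l : ℕ) (hl : 1 ≤ l) :
    ∀ m : ℕ, ∀ p q : ℤ, q.toNat = m → 0 < q → IsCoprime p q → (2 ^ l : ℤ) ∣ q →
      ∃ n, ∃ F : FCF (2 ^ l) n, F.p (n + 1) = p ∧ F.q (n + 1) = q := by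
  intro m
  induction m using Nat.strong_induction_on with
  | _ m ih =>
    intro p q hm hq hcop hdvd
    have hqN : (2 ^ l : ℤ) ≤ q := Int.le_of_dvd hq hdvd
    rcases eq_or_lt_of_le hqN with heq | hlt
    · -- base case q = 2^l
      have hcop' : IsCoprime p ((2 ^ l : ℕ) : ℤ) := by
        rw [show ((2 ^ l : ℕ) : ℤ) = 2 ^ l by push_cast; ring, heq]; exact hcop
      refine ⟨0, baseCF l p hcop', ?_, ?_⟩
      · simp [baseCF]
      · show (if (1:ℕ) = 0 then (0:ℤ) else ((2 ^ l : ℕ) : ℤ)) = q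
        rw [if_neg (by omega)]
        rw [show ((2 ^ l : ℕ) : ℤ) = 2 ^ l by push_cast; ring]
        exact heq
    · obtain ⟨r, s, hs0, hsq, hsdvd, hcop2, hrodd, hedge⟩ := descend_exists hl hlt hcop hdvd
      obtain ⟨n, F, hFp, hFq⟩ := ih s.toNat (by omega) r s rfl hs0 hcop2 hsdvd
      have hq' : F.q (n + 1) < q := by rw [hFq]; exact hsq
      have hedge' : p * F.q (n + 1) - q * F.p (n + 1) = 2 ^ l ∨
          p * F.q (n + 1) - q * F.p (n + 1) = -2 ^ l := by
        rw [hFp, hFq]; exact hedge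
      obtain ⟨G, hGp, hGq⟩ := extend hl F hcop hdvd hq' hedge'
      exact ⟨n + 1, G, hGp, hGq⟩

end FareyCFAux

open FareyCFAux

/-- For every `l ≥ 1` and every `x ≠ ∞` in `X_{2^l}`, there is
exactly one finite `F_{2^l}`-continued fraction whose value is `x`: one exists,
and any two such have the same length `n`, the same `b`, and the same
coefficients `aᵢ` and `εᵢ`. -/
theorem stmt15 (l : ℕ) (hl : 1 ≤ l) (x : X (2 ^ l)) (hx : x ≠ infty (2 ^ l)) :
    (∃ (n : ℕ) (F : FCF (2 ^ l) n),
      (F.p (n + 1) : ℚ) / (F.q (n + 1) : ℚ) = fval x) ∧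
    (∀ (n n' : ℕ) (F : FCF (2 ^ l) n) (F' : FCF (2 ^ l) n'),
      (F.p (n + 1) : ℚ) / (F.q (n + 1) : ℚ) = fval x →
      (F'.p (n' + 1) : ℚ) / (F'.q (n' + 1) : ℚ) = fval x →
      n = n' ∧ F.b = F'.b ∧
        ∀ i, 1 ≤ i → i ≤ n → F.a i = F'.a i ∧ F.ε i = F'.ε i) := by
  obtain ⟨⟨P, Q⟩, hmem⟩ := x
  obtain ⟨hQnn, hcopx, hdvdx, hinf⟩ := hmem
  have hdvd' : (2 ^ l : ℤ) ∣ Q := by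
    rwa [show ((2 ^ l : ℕ) : ℤ) = 2 ^ l by push_cast; ring] at hdvdx
  have hQpos : 0 < Q := by
    rcases lt_or_eq_of_le hQnn with h | h
    · exact h
    · exfalso
      apply hx
      apply Subtype.ext
      have hQ0 : Q = 0 := h.symm
      have hP1 : P = 1 := hinf hQ0
      show (P, Q) = (1, 0)
      rw [hP1, hQ0]
  have hfval : fval (⟨(P, Q), ⟨hQnn, hcopx, hdvdx, hinf⟩⟩ : X (2 ^ l)) = (P : ℚ) / (Q : ℚ) := rfl
  constructor
  · obtain ⟨n, F, h1, h2⟩ := exist_cf l hl Q.toNat P Q rfl hQpos hcopx hdvd'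
    exact ⟨n, F, by rw [h1, h2, hfval]⟩
  · intro n n' F F' hv hv'
    rw [hfval] at hv hv'
    obtain ⟨hFp, hFq⟩ := frac_eq (qtoppos F hl) hQpos (pqcop F (n + 1) (le_refl _)) hcopx hv
    obtain ⟨hFp', hFq'⟩ :=
      frac_eq (qtoppos F' hl) hQpos (pqcop F' (n' + 1) (le_refl _)) hcopx hv'
    obtain ⟨hnn, hvert⟩ := cf_unique l hl n n' F F' (hFp.trans hFp'.symm) (hFq.trans hFq'.symm)
    obtain rfl := hnn
    refine ⟨rfl, ?_, ?_⟩
    · have h1 := (hvert 1 (by omega)).1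
      rw [F.hp1, F'.hp1] at h1
      exact h1
    · intro i hi1 hi2
      obtain ⟨k, rfl⟩ : ∃ k, i = k + 1 := ⟨i - 1, by omega⟩
      have hN : (0:ℤ) < 2 ^ l := by positivity
      have hD := dete F k (by omega)
      have hDne : F.p (k + 1) * F.q k - F.q (k + 1) * F.p k ≠ 0 := by
        rcases hD with h | h <;> omega
      have h00 := not_both_zero (pqcop F k (by omega))
      have e1 := F.hrecp (k + 1) (by omega) (by omega)
      have e2 := F.hrecq (k + 1) (by omega) (by omega)
      have e1' := F'.hrecp (k + 1) (by omega) (by omega)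
      have e2' := F'.hrecq (k + 1) (by omega) (by omega)
      simp only [Nat.add_sub_cancel] at e1 e2 e1' e2'
      rw [← (hvert (k + 1 + 1) (by omega)).1, ← (hvert (k + 1) (by omega)).1,
        ← (hvert k (by omega)).1] at e1'
      rw [← (hvert (k + 1 + 1) (by omega)).2, ← (hvert (k + 1) (by omega)).2,
        ← (hvert k (by omega)).2] at e2'
      exact coeff_unique hDne h00 e1 e2 e1' e2'
end

section
/- Let p be a prime, l ∈ ℕ, and let x ∈ X_{p^l}, x ≠ ∞, and a ∈ ℤ satisfy a/p^l < x < (a+1)/p^l with gcd(a,p) = 1 and gcd(a+1,p) = 1. Suppose the mediant (2a+1)/(2p^l) does not belong to X_{p^l} (i.e., gcd(2a+1, 2p^l) > 1). Then every well directed path from ∞ to x in F_{p^l} has P_0 = a/p^l if x < (2a+1)/(2p^l), and every well directed path from ∞ to x has P_0 = (a+1)/p^l if x > (2a+1)/(2p^l). -/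
lemma farey_key (mj m1 m2 mT uj u1 u2 uT : ℤ)
    (h1 : 1 ≤ mj) (h2 : mj < m1) (h3 : m1 < m2) (hT : 1 ≤ mT)
    (e1 : u1 * mj - m1 * uj = 1)
    (e2 : u2 * m1 - m2 * u1 = 1 ∨ u2 * m1 - m2 * u1 = -1)
    (X1 : 0 < (u2 * m1 - m2 * u1) * (uT * m1 - mT * u1))
    (X2 : (u2 * m1 - m2 * u1) * (uT * m2 - mT * u2) * (m2 - m1) < mT) :
    0 < uT * mj - mT * uj ∧ (uT * m1 - mT * u1) * (m1 - mj) < mT := by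
  rcases e2 with he2 | he2
  · rw [he2, one_mul] at X1 X2
    have I1 : (uT * mj - mT * uj) * m1 - (uT * m1 - mT * u1) * mj = mT := by
      linear_combination mT * e1
    have I2 : (uT * m1 - mT * u1) * m2 - (uT * m2 - mT * u2) * m1 = mT := by
      linear_combination mT * he2
    have mm : (u2 * mj - m2 * uj) * m1 = m2 + mj := by
      linear_combination m2 * e1 + mj * he2
    have hD : 2 ≤ u2 * mj - m2 * uj := by nlinarith
    have hg : m1 - mj ≤ m2 - m1 := by nlinarith
    have Y1pos : 0 < uT * m1 - mT * u1 := X1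
    constructor
    · nlinarith [mul_pos Y1pos (show (0:ℤ) < mj by linarith)]
    · have c2 : (uT * m2 - mT * u2) * (m2 - m1) ≤ mT - 1 := by linarith
      have c3 : (uT * m2 - mT * u2) * (m2 - m1) * m1 ≤ (mT - 1) * m1 :=
        mul_le_mul_of_nonneg_right c2 (by linarith)
      have c1 : (uT * m1 - mT * u1) * (m2 - m1) * m2
          = (uT * m2 - mT * u2) * (m2 - m1) * m1 + mT * (m2 - m1) := by
        linear_combination (m2 - m1) * I2
      have c4 : (uT * m1 - mT * u1) * (m2 - m1) * m2 < mT * m2 := by nlinarith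
      have c5 : (uT * m1 - mT * u1) * (m2 - m1) < mT :=
        lt_of_mul_lt_mul_right c4 (by linarith)
      calc (uT * m1 - mT * u1) * (m1 - mj) ≤ (uT * m1 - mT * u1) * (m2 - m1) :=
            mul_le_mul_of_nonneg_left hg (le_of_lt Y1pos)
        _ < mT := c5
  · rw [he2] at X1 X2
    have Y1neg : uT * m1 - mT * u1 < 0 := by nlinarith
    have mm : (u2 * mj - m2 * uj) * m1 = m2 - mj := by
      linear_combination m2 * e1 + mj * he2
    have hD : 1 ≤ u2 * mj - m2 * uj := by nlinarith
    constructor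
    · have I3 : (uT * mj - mT * uj) * m2 - (uT * m2 - mT * u2) * mj
          = mT * (u2 * mj - m2 * uj) := by ring
      have hX2' : (1 : ℤ) - mT ≤ (uT * m2 - mT * u2) * (m2 - m1) := by nlinarith
      have hDg : mj ≤ (u2 * mj - m2 * uj) * (m2 - m1) := by nlinarith
      have c6 : (uT * mj - mT * uj) * (m2 * (m2 - m1))
          = (uT * m2 - mT * u2) * (m2 - m1) * mj
            + mT * ((u2 * mj - m2 * uj) * (m2 - m1)) := by
        linear_combination (m2 - m1) * I3
      have c7 : (1 - mT) * mj ≤ (uT * m2 - mT * u2) * (m2 - m1) * mj :=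
        mul_le_mul_of_nonneg_right hX2' (by linarith)
      have c8 : mT * mj ≤ mT * ((u2 * mj - m2 * uj) * (m2 - m1)) :=
        mul_le_mul_of_nonneg_left hDg (by linarith)
      have c9 : 0 < (uT * mj - mT * uj) * (m2 * (m2 - m1)) := by nlinarith
      by_contra hc
      push_neg at hc
      have : (uT * mj - mT * uj) * (m2 * (m2 - m1)) ≤ 0 :=
        mul_nonpos_of_nonpos_of_nonneg hc (by nlinarith)
      linarith
    · nlinarith [mul_pos (show (0:ℤ) < -(uT * m1 - mT * u1) by linarith)
        (show (0:ℤ) < m1 - mj by linarith)]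

lemma farey_M (u m : ℕ → ℤ) :
    ∀ (k T j : ℕ), 1 ≤ j → j + 1 + k = T →
    (∀ i, 1 ≤ i → i ≤ T → 1 ≤ m i) →
    (∀ i, 1 ≤ i → i + 1 ≤ T → m i < m (i + 1)) →
    (∀ i, 1 ≤ i → i + 1 ≤ T →
      u (i+1) * m i - m (i+1) * u i = 1 ∨ u (i+1) * m i - m (i+1) * u i = -1) →
    0 < (u (j+1) * m j - m (j+1) * u j) * (u T * m j - m T * u j) ∧
      (u (j+1) * m j - m (j+1) * u j) * (u T * m (j+1) - m T * u (j+1)) * (m (j+1) - m j) < m T := by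
  intro k
  induction k with
  | zero =>
    intro T j hj hT Hpos Hmono Hdet
    have hT' : j + 1 = T := by omega
    subst hT'
    constructor
    · rcases Hdet j hj le_rfl with h | h <;> rw [h] <;> norm_num
    · have hz : u (j+1) * m (j+1) - m (j+1) * u (j+1) = 0 := by ring
      rw [hz, mul_zero, zero_mul]
      exact lt_of_lt_of_le one_pos (Hpos (j+1) (by omega) le_rfl)
  | succ k ih =>
    intro T j hj hT Hpos Hmono Hdet
    have hjT : j + 2 ≤ T := by omega
    obtain ⟨IH1, IH2⟩ := ih T (j+1) (by omega) (by omega) Hpos Hmono Hdet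
    have hmj : 1 ≤ m j := Hpos j hj (by omega)
    have hm12 : m j < m (j+1) := Hmono j hj (by omega)
    have hm23 : m (j+1) < m (j+2) := Hmono (j+1) (by omega) (by omega)
    have hmT : 1 ≤ m T := Hpos T (by omega) le_rfl
    have e2 := Hdet (j+1) (by omega) (by omega)
    rcases Hdet j hj (by omega) with e1 | e1
    · have key := farey_key (m j) (m (j+1)) (m (j+2)) (m T)
        (u j) (u (j+1)) (u (j+2)) (u T) hmj hm12 hm23 hmT e1 e2 IH1 IH2
      rw [e1, one_mul, one_mul]
      exact key
    · have e1' : (-u (j+1)) * m j - m (j+1) * (-u j) = 1 := by linear_combination -e1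
      have e2' : (-u (j+2)) * m (j+1) - m (j+2) * (-u (j+1)) = 1 ∨
          (-u (j+2)) * m (j+1) - m (j+2) * (-u (j+1)) = -1 := by
        rcases e2 with h | h
        · right; linear_combination -h
        · left; linear_combination -h
      have X1' : 0 < ((-u (j+2)) * m (j+1) - m (j+2) * (-u (j+1))) *
          ((-u T) * m (j+1) - m T * (-u (j+1))) := by
        have heq : ((-u (j+2)) * m (j+1) - m (j+2) * (-u (j+1))) *
            ((-u T) * m (j+1) - m T * (-u (j+1)))
            = (u (j+2) * m (j+1) - m (j+2) * u (j+1)) *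
              (u T * m (j+1) - m T * u (j+1)) := by ring
        rw [heq]; exact IH1
      have X2' : ((-u (j+2)) * m (j+1) - m (j+2) * (-u (j+1))) *
          ((-u T) * m (j+2) - m T * (-u (j+2))) * (m (j+2) - m (j+1)) < m T := by
        have heq : ((-u (j+2)) * m (j+1) - m (j+2) * (-u (j+1))) *
            ((-u T) * m (j+2) - m T * (-u (j+2))) * (m (j+2) - m (j+1))
            = (u (j+2) * m (j+1) - m (j+2) * u (j+1)) *
              (u T * m (j+2) - m T * u (j+2)) * (m (j+2) - m (j+1)) := by ring
        rw [heq]; exact IH2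
      obtain ⟨K1, K2⟩ := farey_key (m j) (m (j+1)) (m (j+2)) (m T)
        (-u j) (-u (j+1)) (-u (j+2)) (-u T) hmj hm12 hm23 hmT e1' e2' X1' X2'
      rw [e1]
      constructor
      · have heq : (-u T) * m j - m T * (-u j) = -(u T * m j - m T * u j) := by ring
        rw [heq] at K1
        nlinarith
      · have heq : ((-u T) * m (j+1) - m T * (-u (j+1))) * (m (j+1) - m j)
            = -((u T * m (j+1) - m T * u (j+1))) * (m (j+1) - m j) := by ring
        rw [heq] at K2
        nlinarith

lemma eg_excl (mT m2 Z : ℤ) (hmT : 1 ≤ mT) (hm2 : 2 ≤ m2) (hZ : mT + 1 ≤ Z)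
    (h : (m2 * Z - mT) * (m2 - 1) < mT) : False := by
  nlinarith [mul_nonneg (show (0:ℤ) ≤ m2 - 2 by linarith) (show (0:ℤ) ≤ Z by linarith),
    mul_nonneg (show (0:ℤ) ≤ m2 - 2 by linarith) (show (0:ℤ) ≤ mT + 2 by linarith)]

lemma eg_half (mT m2 W : ℤ) (hmT : 1 ≤ mT) (hm2 : 3 ≤ m2) (hW : mT + 1 ≤ 2 * W)
    (h : (m2 * W - mT) * (m2 - 1) < mT) : False := by
  have hW1 : 1 ≤ W := by nlinarith
  nlinarith [mul_nonneg (show (0:ℤ) ≤ m2 - 3 by linarith) (show (0:ℤ) ≤ W by linarith),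
    mul_nonneg (show (0:ℤ) ≤ m2 - 2 by linarith)
      (show (0:ℤ) ≤ m2 * W - mT by nlinarith)]

set_option maxHeartbeats 2000000 in
/-- Let `p` be a prime, `l ≥ 1`, `x ∈ X_{p^l}`, `x ≠ ∞`, and
`a ∈ ℤ` with `a/p^l < x < (a+1)/p^l`, `gcd(a, p) = 1 = gcd(a+1, p)`.  If the
mediant `(2a+1)/(2p^l)` is not in `X_{p^l}` (i.e. `gcd(2a+1, 2p^l) > 1`), then
every well directed path from `∞` to `x` in `F_{p^l}` has first vertex
`P₀ = a/p^l` if `x < (2a+1)/(2p^l)`, and `P₀ = (a+1)/p^l` if `x > (2a+1)/(2p^l)`. -/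
theorem stmt16 (p l : ℕ) (hp : p.Prime) (hl : 1 ≤ l)
    (x : X (p ^ l)) (hx : x ≠ infty (p ^ l)) (a : ℤ)
    (hax : (a : ℚ) / (p : ℚ) ^ l < fval x)
    (hxa : fval x < ((a : ℚ) + 1) / (p : ℚ) ^ l)
    (hcop1 : IsCoprime a (p : ℤ)) (hcop2 : IsCoprime (a + 1) (p : ℤ))
    (hmed : 1 < Int.gcd (2 * a + 1) (2 * (p : ℤ) ^ l)) :
    ∀ (n : ℕ) (P : ℕ → X (p ^ l)),
      IsWellDirectedPath (p ^ l) n P → P (n + 1) = x →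
      (fval x < (2 * (a : ℚ) + 1) / (2 * (p : ℚ) ^ l) →
        (P 1).1 = (a, (p : ℤ) ^ l)) ∧
      ((2 * (a : ℚ) + 1) / (2 * (p : ℚ) ^ l) < fval x →
        (P 1).1 = (a + 1, (p : ℤ) ^ l)) := by
  intro n P hWD hPx
  obtain ⟨hP0, hAdj, hInc, -⟩ := hWD
  have hp2 : 2 ≤ p := hp.two_le
  have hNpos : (0:ℤ) < ((p ^ l : ℕ) : ℤ) := by
    have : 0 < p ^ l := pow_pos hp.pos l
    exact_mod_cast this
  set u : ℕ → ℤ := fun i => (P i).1.1 with hu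
  set q : ℕ → ℤ := fun i => (P i).1.2 with hqdef
  have hdvd : ∀ i, ((p ^ l : ℕ) : ℤ) ∣ q i := fun i => (P i).2.2.2.1
  set m : ℕ → ℤ := fun i => q i / ((p ^ l : ℕ) : ℤ) with hmdef
  have hm : ∀ i, ((p ^ l : ℕ) : ℤ) * m i = q i := fun i => Int.mul_ediv_cancel' (hdvd i)
  have hq0 : q 0 = 0 := by show (P 0).1.2 = 0; rw [hP0]; rfl
  have hqpos : ∀ i, i ≤ n + 1 → 1 ≤ i → 0 < q i := by
    intro i
    induction i with
    | zero => intro _ h; omega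
    | succ i ih =>
      intro hle _
      have h : q i < q (i+1) := hInc i (by omega)
      rcases Nat.eq_zero_or_pos i with h0 | h1
      · subst h0; rw [hq0] at h; exact h
      · exact lt_trans (ih (by omega) h1) h
  -- q 1 = N
  have hadj0 := (hAdj 0 (Nat.zero_le n)).2
  rw [hP0] at hadj0
  have hinf1 : (infty (p^l)).1.1 = 1 := rfl
  have hinf2 : (infty (p^l)).1.2 = 0 := rfl
  rw [hinf1, hinf2, mul_zero, mul_one, zero_sub] at hadj0
  have hq1pos : 0 < q 1 := hqpos 1 (by omega) le_rfl
  have hq1 : q 1 = ((p^l : ℕ) : ℤ) := by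
    rcases hadj0 with h | h
    · exfalso; linarith [hq1pos, hNpos]
    · linarith
  have hm1 : m 1 = 1 := by
    have h1 := hm 1
    rw [hq1] at h1
    have h2 : ((p^l:ℕ):ℤ) * m 1 = ((p^l:ℕ):ℤ) * 1 := by rw [mul_one]; exact h1
    exact mul_left_cancel₀ (ne_of_gt hNpos) h2
  have hmpos : ∀ i, 1 ≤ i → i ≤ n+1 → 1 ≤ m i := by
    intro i h1 h2
    by_contra hc
    push_neg at hc
    have h3 := hqpos i h2 h1
    have h4 := hm i
    nlinarith
  have hmmono : ∀ i, 1 ≤ i → i + 1 ≤ n+1 → m i < m (i+1) := by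
    intro i h1 h2
    have h3 : q i < q (i+1) := hInc i (by omega)
    have h4 := hm i; have h5 := hm (i+1)
    by_contra hc
    push_neg at hc
    nlinarith
  have Hdet : ∀ i, 1 ≤ i → i + 1 ≤ n + 1 →
      u (i+1) * m i - m (i+1) * u i = 1 ∨ u (i+1) * m i - m (i+1) * u i = -1 := by
    intro i h1 h2
    have hd := (hAdj i (by omega)).2
    have h4 := hm i; have h5 := hm (i+1)
    rcases hd with h | h
    · left
      have h6 : ((p^l:ℕ):ℤ) * (u (i+1) * m i - m (i+1) * u i) = ((p^l:ℕ):ℤ) * 1 := by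
        rw [mul_one]; linear_combination h + u (i+1) * h4 - u i * h5
      exact mul_left_cancel₀ (ne_of_gt hNpos) h6
    · right
      have h6 : ((p^l:ℕ):ℤ) * (u (i+1) * m i - m (i+1) * u i) = ((p^l:ℕ):ℤ) * (-1) := by
        linear_combination h + u (i+1) * h4 - u i * h5
      exact mul_left_cancel₀ (ne_of_gt hNpos) h6
  -- value conversions
  have hfx : fval x = (u (n+1) : ℚ) / (q (n+1) : ℚ) := by rw [← hPx]; rfl
  have hplQ : (0:ℚ) < (p:ℚ)^l := by
    have : (0:ℚ) < (p:ℚ) := by exact_mod_cast hp.pos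
    positivity
  have hqT : (q (n+1) : ℚ) = ((p:ℚ)^l) * (m (n+1) : ℚ) := by
    have h4 := hm (n+1)
    exact_mod_cast h4.symm
  have hmT1 : 1 ≤ m (n+1) := hmpos (n+1) (by omega) le_rfl
  have hqTpos : (0:ℚ) < (q (n+1) : ℚ) := by
    have := hqpos (n+1) le_rfl (by omega)
    exact_mod_cast this
  rw [hfx] at hax hxa
  rw [div_lt_div_iff₀ hplQ hqTpos] at hax
  rw [div_lt_div_iff₀ hqTpos hplQ] at hxa
  rw [hqT] at hax hxa
  have haxZ : a * m (n+1) < u (n+1) := by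
    have e3 : (a:ℚ) * ((p:ℚ)^l * (m (n+1):ℚ)) = ((a:ℚ) * (m (n+1):ℚ)) * (p:ℚ)^l := by ring
    rw [e3] at hax
    exact_mod_cast lt_of_mul_lt_mul_right hax (le_of_lt hplQ)
  have hxaZ : u (n+1) < (a + 1) * m (n+1) := by
    have e3 : ((a:ℚ)+1) * ((p:ℚ)^l * (m (n+1):ℚ)) = (((a:ℚ)+1) * (m (n+1):ℚ)) * (p:ℚ)^l := by
      ring
    rw [e3] at hxa
    exact_mod_cast lt_of_mul_lt_mul_right hxa (le_of_lt hplQ)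
  -- p divides 2a+1
  have h2a : ((p:ℕ):ℤ) ∣ 2 * a + 1 := by
    have hg1 : Int.gcd (2*a+1) (2*(p:ℤ)^l) ≠ 1 := by omega
    obtain ⟨r, hr, hrd⟩ := Nat.exists_prime_and_dvd hg1
    have hr1 : (r:ℤ) ∣ 2*a+1 :=
      dvd_trans (Int.natCast_dvd_natCast.mpr hrd) (Int.gcd_dvd_left _ _)
    have hr2 : (r:ℤ) ∣ 2*(p:ℤ)^l :=
      dvd_trans (Int.natCast_dvd_natCast.mpr hrd) (Int.gcd_dvd_right _ _)
    have hrn : r ∣ 2 * p^l := by exact_mod_cast hr2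
    rcases (Nat.Prime.dvd_mul hr).mp hrn with h2 | hpl
    · exfalso
      have hre : r = 2 := (Nat.prime_dvd_prime_iff_eq hr Nat.prime_two).mp h2
      subst hre
      have : (2:ℤ) ∣ 2*a+1 := hr1
      omega
    · have hrp : r = p :=
        (Nat.prime_dvd_prime_iff_eq hr hp).mp (hr.dvd_of_dvd_pow hpl)
      subst hrp
      exact hr1
  have hcopu2 : IsCoprime (u 2) ((p:ℕ):ℤ) := by
    have hbase : IsCoprime (u 2) (q 2) := (P 2).2.2.1
    have hpq : ((p:ℕ):ℤ) ∣ q 2 := by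
      refine dvd_trans ?_ (hdvd 2)
      exact_mod_cast Int.natCast_dvd_natCast.mpr (dvd_pow_self p (by omega : l ≠ 0))
    exact IsCoprime.of_isCoprime_of_dvd_right hbase hpq
  have hkill : u 2 = 2 * a + 1 → False := by
    intro h
    have hdd : ((p:ℕ):ℤ) ∣ u 2 := by rw [h]; exact h2a
    have hun : IsUnit ((p:ℕ):ℤ) := hcopu2.isUnit_of_dvd' hdd dvd_rfl
    rw [Int.isUnit_iff] at hun
    rcases hun with h' | h' <;> omega
  -- the case n = 0 is impossible
  by_cases hn : n = 0
  · subst hn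
    exfalso
    rw [hm1, mul_one] at haxZ hxaZ
    omega
  have hn1 : 1 ≤ n := by omega
  -- apply the master lemma at j = 1
  obtain ⟨Res1, Res2⟩ := farey_M u m (n-1) (n+1) 1 le_rfl (by omega)
    (fun i h1 h2 => hmpos i h1 h2) (fun i h1 h2 => hmmono i h1 h2)
    (fun i h1 h2 => Hdet i h1 h2)
  simp only [hm1, mul_one, Nat.reduceAdd] at Res1 Res2
  have hm2 : 2 ≤ m 2 := by
    have h7 := hmmono 1 le_rfl (by omega)
    simp only [hm1, Nat.reduceAdd] at h7
    omega
  have hd1 := Hdet 1 le_rfl (by omega)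
  simp only [hm1, mul_one, Nat.reduceAdd] at hd1
  constructor
  · -- x below the mediant : P₀ = a / p^l
    intro hlt
    rw [hfx, div_lt_div_iff₀ hqTpos (by positivity : (0:ℚ) < 2*(p:ℚ)^l), hqT] at hlt
    have h5 : 2 * u (n+1) < (2*a+1) * m (n+1) := by
      have e1' : (u (n+1):ℚ) * (2*(p:ℚ)^l) = (2*(u (n+1):ℚ)) * (p:ℚ)^l := by ring
      have e2' : (2*(a:ℚ)+1) * ((p:ℚ)^l * (m (n+1):ℚ))
          = ((2*(a:ℚ)+1) * (m (n+1):ℚ)) * (p:ℚ)^l := by ring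
      rw [e1', e2'] at hlt
      have hQ := lt_of_mul_lt_mul_right hlt (le_of_lt hplQ)
      exact_mod_cast hQ
    have hu1 : u 1 = a := by
      rcases hd1 with he | he
      · -- first step to the right
        rw [he, one_mul] at Res1 Res2
        have hu2v : u 2 = m 2 * u 1 + 1 := by linarith
        have hres : (m 2 * (u (n+1) - m (n+1) * u 1) - m (n+1)) * (m 2 - 1) < m (n+1) := by
          have heq : u (n+1) * m 2 - m (n+1) * u 2
              = m 2 * (u (n+1) - m (n+1) * u 1) - m (n+1) := by rw [hu2v]; ring
          rw [heq] at Res2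
          exact Res2
        have hb1 : u 1 ≤ a := by nlinarith
        have hb2 : a ≤ u 1 := by
          by_contra hcon
          push_neg at hcon
          have hZbig : m (n+1) + 1 ≤ u (n+1) - m (n+1) * u 1 := by
            nlinarith [mul_nonneg (show (0:ℤ) ≤ m (n+1) by linarith)
              (show (0:ℤ) ≤ a - 1 - u 1 by omega)]
          exact absurd (eg_excl _ _ _ hmT1 hm2 hZbig hres) (not_false)
        omega
      · -- first step to the left : impossible below the mediant
        exfalso
        rw [he] at Res1 Res2
        have hW : 0 < m (n+1) * u 1 - u (n+1) := by nlinarith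
        have hu2v : u 2 = m 2 * u 1 - 1 := by linarith
        have hres : (m 2 * (m (n+1) * u 1 - u (n+1)) - m (n+1)) * (m 2 - 1) < m (n+1) := by
          have heq : (-1 : ℤ) * (u (n+1) * m 2 - m (n+1) * u 2) * (m 2 - 1)
              = (m 2 * (m (n+1) * u 1 - u (n+1)) - m (n+1)) * (m 2 - 1) := by
            rw [hu2v]; ring
          rw [heq] at Res2
          exact Res2
        have hbu : a + 1 ≤ u 1 := by
          by_contra hcon
          push_neg at hcon
          nlinarith [mul_nonneg (show (0:ℤ) ≤ m (n+1) by linarith)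
            (show (0:ℤ) ≤ a - u 1 by omega)]
        have hble : u 1 ≤ a + 1 := by
          by_contra hcon
          push_neg at hcon
          have hWbig : m (n+1) + 1 ≤ m (n+1) * u 1 - u (n+1) := by
            nlinarith [mul_nonneg (show (0:ℤ) ≤ m (n+1) by linarith)
              (show (0:ℤ) ≤ u 1 - a - 2 by omega)]
          exact eg_excl _ _ _ hmT1 hm2 hWbig hres
        have hu1 : u 1 = a + 1 := by omega
        have h2W : m (n+1) + 1 ≤ 2 * (m (n+1) * u 1 - u (n+1)) := by
          rw [hu1]; nlinarith
        rcases (show m 2 = 2 ∨ 3 ≤ m 2 by omega) with h2 | h3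
        · exact hkill (by rw [hu2v, hu1, h2]; ring)
        · exact eg_half _ _ _ hmT1 h3 h2W hres
    refine Prod.ext ?_ ?_
    · exact hu1
    · show q 1 = ((p:ℤ))^l
      rw [hq1]; push_cast; ring
  · -- x above the mediant : P₀ = (a+1) / p^l
    intro hgt
    rw [hfx, div_lt_div_iff₀ (by positivity : (0:ℚ) < 2*(p:ℚ)^l) hqTpos, hqT] at hgt
    have h5 : (2*a+1) * m (n+1) < 2 * u (n+1) := by
      have e1' : (u (n+1):ℚ) * (2*(p:ℚ)^l) = (2*(u (n+1):ℚ)) * (p:ℚ)^l := by ring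
      have e2' : (2*(a:ℚ)+1) * ((p:ℚ)^l * (m (n+1):ℚ))
          = ((2*(a:ℚ)+1) * (m (n+1):ℚ)) * (p:ℚ)^l := by ring
      rw [e1', e2'] at hgt
      have hQ := lt_of_mul_lt_mul_right hgt (le_of_lt hplQ)
      exact_mod_cast hQ
    have hu1 : u 1 = a + 1 := by
      rcases hd1 with he | he
      · -- first step to the right : impossible above the mediant
        exfalso
        rw [he, one_mul] at Res1 Res2
        have hu2v : u 2 = m 2 * u 1 + 1 := by linarith
        have hres : (m 2 * (u (n+1) - m (n+1) * u 1) - m (n+1)) * (m 2 - 1) < m (n+1) := by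
          have heq : u (n+1) * m 2 - m (n+1) * u 2
              = m 2 * (u (n+1) - m (n+1) * u 1) - m (n+1) := by rw [hu2v]; ring
          rw [heq] at Res2
          exact Res2
        have hble : u 1 ≤ a := by
          by_contra hcon
          push_neg at hcon
          nlinarith [mul_nonneg (show (0:ℤ) ≤ m (n+1) by linarith)
            (show (0:ℤ) ≤ u 1 - a - 1 by omega)]
        rcases (show u 1 = a ∨ u 1 ≤ a - 1 by omega) with hEq | hLt
        · rcases (show m 2 = 2 ∨ 3 ≤ m 2 by omega) with h2 | h3
          · exact hkill (by rw [hu2v, hEq, h2])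
          · have h2Z : m (n+1) + 1 ≤ 2 * (u (n+1) - m (n+1) * u 1) := by
              rw [hEq]; nlinarith
            exact eg_half _ _ _ hmT1 h3 h2Z hres
        · have hZbig : m (n+1) + 1 ≤ u (n+1) - m (n+1) * u 1 := by
            nlinarith [mul_nonneg (show (0:ℤ) ≤ m (n+1) by linarith)
              (show (0:ℤ) ≤ a - 1 - u 1 by omega)]
          exact eg_excl _ _ _ hmT1 hm2 hZbig hres
      · -- first step to the left
        rw [he] at Res1 Res2
        have hW : 0 < m (n+1) * u 1 - u (n+1) := by nlinarith
        have hu2v : u 2 = m 2 * u 1 - 1 := by linarith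
        have hres : (m 2 * (m (n+1) * u 1 - u (n+1)) - m (n+1)) * (m 2 - 1) < m (n+1) := by
          have heq : (-1 : ℤ) * (u (n+1) * m 2 - m (n+1) * u 2) * (m 2 - 1)
              = (m 2 * (m (n+1) * u 1 - u (n+1)) - m (n+1)) * (m 2 - 1) := by
            rw [hu2v]; ring
          rw [heq] at Res2
          exact Res2
        have hbu : a + 1 ≤ u 1 := by
          by_contra hcon
          push_neg at hcon
          nlinarith [mul_nonneg (show (0:ℤ) ≤ m (n+1) by linarith)
            (show (0:ℤ) ≤ a - u 1 by omega)]
        have hble : u 1 ≤ a + 1 := by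
          by_contra hcon
          push_neg at hcon
          have hWbig : m (n+1) + 1 ≤ m (n+1) * u 1 - u (n+1) := by
            nlinarith [mul_nonneg (show (0:ℤ) ≤ m (n+1) by linarith)
              (show (0:ℤ) ≤ u 1 - a - 2 by omega)]
          exact eg_excl _ _ _ hmT1 hm2 hWbig hres
        omega
    refine Prod.ext ?_ ?_
    · exact hu1
    · show q 1 = ((p:ℤ))^l
      rw [hq1]; push_cast; ring
end

section
/- For every l ∈ ℕ and every x ∈ X_{2^l} with x ≠ ∞, every well directed path from ∞ to x in F_{2^l} passes through the vertex b/2^l as its first vertex after ∞, where b = 2·⌊2^{l−1} x⌋ + 1. -/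
set_option maxHeartbeats 1000000 in
/-- For every `l ≥ 1` and every `x ≠ ∞` in `X_{2^l}`, every
well directed path from `∞` to `x` in `F_{2^l}` has first vertex (after `∞`)
`b/2^l` where `b = 2·⌊2^(l−1)·x⌋ + 1`. -/
theorem stmt17 (l : ℕ) (hl : 1 ≤ l) (x : X (2 ^ l)) (hx : x ≠ infty (2 ^ l))
    (n : ℕ) (P : ℕ → X (2 ^ l))
    (hP : IsWellDirectedPath (2 ^ l) n P) (hlast : P (n + 1) = x) :
    (P 1).1 = (2 * ⌊(2 : ℚ) ^ (l - 1) * fval x⌋ + 1, (2 : ℤ) ^ l) := by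
  obtain ⟨h0, hadj, hmono, -⟩ := hP
  set N : ℤ := 2 ^ l with hNdef
  have hNcast : ((2 ^ l : ℕ) : ℤ) = N := by push_cast [hNdef]; ring
  have hNpos : 0 < N := by positivity
  have hq0 : (P 0).1.2 = 0 := by rw [h0]; rfl
  have hp0 : (P 0).1.1 = 1 := by rw [h0]; rfl
  have hq1pos : 0 < (P 1).1.2 := by
    have h := hmono 0 (Nat.zero_le n); norm_num at h; omega
  have hq1 : (P 1).1.2 = N := by
    rcases (hadj 0 (Nat.zero_le n)).2 with h | h <;>
      rw [hq0, hp0, hNcast] at h <;> norm_num at h <;> omega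
  set a : ℤ := (P 1).1.1 with hadef
  have hcop : IsCoprime a (P 1).1.2 := (P 1).2.2.1
  have haodd : a % 2 = 1 := by
    rw [hq1] at hcop
    have h2 : (2 : ℤ) ∣ N := hNdef ▸ dvd_pow_self 2 (by omega)
    by_contra hc
    have h2a : (2 : ℤ) ∣ a := by omega
    have := hcop.isUnit_of_dvd' h2a h2
    rw [Int.isUnit_iff] at this
    omega
  have hdvd : ∀ i, N ∣ (P i).1.2 := fun i => hNcast ▸ (P i).2.2.2.1
  have hqlow : ∀ i, 1 ≤ i → i ≤ n + 1 → (i : ℤ) * N ≤ (P i).1.2 := by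
    intro i hi
    induction i with
    | zero => omega
    | succ j ih =>
      intro hj
      rcases Nat.eq_or_lt_of_le hi with h1 | h1
      · rw [← h1]; push_cast; rw [hq1]; ring_nf; exact le_refl _
      · have hj1 : 1 ≤ j := by omega
        have ihj := ih hj1 (by omega)
        have hlt := hmono j (by omega)
        obtain ⟨c, hc⟩ := hdvd j
        obtain ⟨d, hd⟩ := hdvd (j + 1)
        have hcd : c < d := by nlinarith
        have hjc : (j : ℤ) ≤ c := by nlinarith
        push_cast
        nlinarith
  have hNQ : (0 : ℚ) < (N : ℚ) := by exact_mod_cast hNpos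
  have hstep : ∀ i, 1 ≤ i → i ≤ n →
      |fval (P (i + 1)) - fval (P i)| ≤ 1 / ((i : ℚ) * ((i : ℚ) + 1) * N) := by
    intro i hi hin
    have hq : 0 < (P i).1.2 := by
      have h1 := hqlow i hi (by omega)
      have h2 : (0 : ℤ) < (i : ℤ) * N := by
        have : (1 : ℤ) ≤ (i : ℤ) := by exact_mod_cast hi
        nlinarith
      omega
    have hs : 0 < (P (i + 1)).1.2 := lt_trans hq (hmono i hin)
    have hqQ : (0 : ℚ) < ((P i).1.2 : ℚ) := by exact_mod_cast hq
    have hsQ : (0 : ℚ) < ((P (i + 1)).1.2 : ℚ) := by exact_mod_cast hs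
    have hqlQ : (i : ℚ) * N ≤ ((P i).1.2 : ℚ) := by exact_mod_cast hqlow i hi (by omega)
    have hslQ : ((i : ℚ) + 1) * N ≤ ((P (i + 1)).1.2 : ℚ) := by
      exact_mod_cast hqlow (i + 1) (by omega) (by omega)
    have hiQ : (1 : ℚ) ≤ (i : ℚ) := by exact_mod_cast hi
    have hform : fval (P (i + 1)) - fval (P i) =
        (((P (i+1)).1.1 : ℚ) * ((P i).1.2 : ℚ) - ((P (i+1)).1.2 : ℚ) * ((P i).1.1 : ℚ))
          / (((P (i+1)).1.2 : ℚ) * ((P i).1.2 : ℚ)) := by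
      unfold fval
      field_simp
    have hbound : (N : ℚ) / (((P (i+1)).1.2 : ℚ) * ((P i).1.2 : ℚ)) ≤
        1 / ((i : ℚ) * ((i : ℚ) + 1) * N) := by
      rw [div_le_div_iff₀ (by positivity) (by positivity)]
      nlinarith [mul_le_mul hslQ hqlQ (by positivity) (le_of_lt hsQ)]
    rcases (hadj i hin).2 with h | h
    · have hQ : (((P (i+1)).1.1 : ℚ) * ((P i).1.2 : ℚ) - ((P (i+1)).1.2 : ℚ) * ((P i).1.1 : ℚ)) = (N : ℚ) := by
        rw [hNcast] at h; exact_mod_cast h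
      rw [hform, hQ, abs_of_pos (by positivity)]
      exact hbound
    · have hQ : (((P (i+1)).1.1 : ℚ) * ((P i).1.2 : ℚ) - ((P (i+1)).1.2 : ℚ) * ((P i).1.1 : ℚ)) = -(N : ℚ) := by
        rw [hNcast] at h; exact_mod_cast h
      rw [hform, hQ, neg_div, abs_neg, abs_of_pos (by positivity)]
      exact hbound
  have htel : ∀ m, m ≤ n → |fval (P (m + 1)) - fval (P 1)| ≤ (1 - 1 / ((m : ℚ) + 1)) / N := by
    intro m
    induction m with
    | zero => intro _; simp
    | succ j ih =>
      intro hj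
      have ihj := ih (by omega)
      have hs := hstep (j + 1) (by omega) hj
      have tri : |fval (P (j + 1 + 1)) - fval (P 1)| ≤
          |fval (P (j + 1 + 1)) - fval (P (j + 1))| + |fval (P (j + 1)) - fval (P 1)| := by
        calc |fval (P (j + 1 + 1)) - fval (P 1)|
            = |(fval (P (j + 1 + 1)) - fval (P (j + 1))) + (fval (P (j + 1)) - fval (P 1))| := by
              ring_nf
          _ ≤ _ := abs_add_le _ _
      have hj1 : (0 : ℚ) < (j : ℚ) + 1 := by positivity
      have hj2 : (0 : ℚ) < (j : ℚ) + 2 := by positivity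
      have key : 1 / (((j : ℚ) + 1) * (((j : ℚ) + 1) + 1) * N) + (1 - 1 / ((j : ℚ) + 1)) / N
          = (1 - 1 / (((j : ℚ) + 1) + 1)) / N := by
        field_simp
        ring
      push_cast at hs ⊢
      push_cast at key
      linarith
  have hfinal : |fval x - fval (P 1)| < 1 / N := by
    have h := htel n le_rfl
    rw [hlast] at h
    have h1 : (0 : ℚ) < 1 / ((n : ℚ) + 1) := by positivity
    have h2 : (1 - 1 / ((n : ℚ) + 1)) / (N : ℚ) < 1 / N := by
      rw [div_lt_div_iff₀ hNQ hNQ]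
      nlinarith
    linarith
  -- finish
  have hf1 : fval (P 1) = (a : ℚ) / (N : ℚ) := by
    unfold fval
    rw [hq1]
  set m : ℤ := (a - 1) / 2 with hmdef
  have ham : a = 2 * m + 1 := by omega
  have hNQ2 : (N : ℚ) = 2 * (2 : ℚ) ^ (l - 1) := by
    have h2l : (2 : ℚ) ^ l = 2 * 2 ^ (l - 1) := by
      conv_lhs => rw [show l = (l - 1) + 1 from by omega]
      rw [pow_succ]
      ring
    rw [hNdef]
    push_cast
    exact h2l
  have hpow : (0 : ℚ) < (2 : ℚ) ^ (l - 1) := by positivity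
  rw [hf1, abs_sub_lt_iff] at hfinal
  obtain ⟨hlt1, hlt2⟩ := hfinal
  have e1 : ((a : ℚ) - 1) / N = (a : ℚ) / N - 1 / N := by ring
  have e2 : ((a : ℚ) + 1) / N = (a : ℚ) / N + 1 / N := by ring
  have hxlow : ((a : ℚ) - 1) / N < fval x := by rw [e1]; linarith
  have hxhigh : fval x < ((a : ℚ) + 1) / N := by rw [e2]; linarith
  have hflo : ⌊(2 : ℚ) ^ (l - 1) * fval x⌋ = m := by
    rw [Int.floor_eq_iff]
    constructor
    · have : ((a : ℚ) - 1) / N = (m : ℚ) / (2 : ℚ) ^ (l - 1) := by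
        rw [hNQ2]
        have : (a : ℚ) = 2 * (m : ℚ) + 1 := by exact_mod_cast ham
        rw [this]
        field_simp
        ring
      rw [this] at hxlow
      rw [div_lt_iff₀ hpow] at hxlow
      nlinarith
    · have : ((a : ℚ) + 1) / N = ((m : ℚ) + 1) / (2 : ℚ) ^ (l - 1) := by
        rw [hNQ2]
        have : (a : ℚ) = 2 * (m : ℚ) + 1 := by exact_mod_cast ham
        rw [this]
        field_simp
        ring
      rw [this] at hxhigh
      rw [lt_div_iff₀ hpow] at hxhigh
      nlinarith
  rw [Prod.ext_iff]
  exact ⟨by rw [hflo]; omega, by rw [hq1, hNdef]⟩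
end
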